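/- arXiv:2201.06714 — 9 statements merged into one kernel-verified Lean document; each statement's English description precedes it below -/
import Mathlib

section
/- Let d ≥ 1, T ≥ 1, 0 < τ̲ ≤ 1, let g_1,…,g_T ∈ ℝ^d, let τ_1,…,τ_{T+1} ∈ [τ̲, 1], and let m_0 = 0, m_t = (1 − τ_t) m_{t−1} + τ_t g_t. Let v̂_1,…,v̂_{T−1} ∈ ℝ^d have strictly positive coordinates, let α_1,…,α_{T−1} > 0, and suppose the iterates satisfy θ_{t+1,i} = θ_{t,i} − α_t v̂_{t,i}^{−1/2} m_{t,i} for 1 ≤ t ≤ T−1 and all i. Then Σ_{t=1}^{T} ((1 − τ_t)/τ_t) ⟨m_{t−1}, θ_{t−1} − θ_t⟩ ≤ ((1 − τ̲)/τ̲) Σ_{t=1}^{T−1} α_t Σ_i m_{t,i}² v̂_{t,i}^{−1/2}. -/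
/-- Bound of the term `R_{2,T}` in the AdaTerm regret analysis (no projection step). -/
theorem adaterm_R2_bound
    (d T : ℕ) (hd : 1 ≤ d) (hT : 1 ≤ T)
    (τlo : ℝ) (hτlo0 : 0 < τlo) (hτlo1 : τlo ≤ 1)
    (g : ℕ → Fin d → ℝ) (τ : ℕ → ℝ)
    (hτ : ∀ t, 1 ≤ t → t ≤ T + 1 → τlo ≤ τ t ∧ τ t ≤ 1)
    (m : ℕ → Fin d → ℝ) (hm0 : m 0 = 0)
    (hm : ∀ t, 1 ≤ t → t ≤ T → ∀ i, m t i = (1 - τ t) * m (t - 1) i + τ t * g t i)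
    (v : ℕ → Fin d → ℝ) (hv : ∀ t, 1 ≤ t → t ≤ T - 1 → ∀ i, 0 < v t i)
    (a : ℕ → ℝ) (ha : ∀ t, 1 ≤ t → t ≤ T - 1 → 0 < a t)
    (θ : ℕ → Fin d → ℝ)
    (hθ : ∀ t, 1 ≤ t → t ≤ T - 1 → ∀ i,
      θ (t + 1) i = θ t i - a t * (Real.sqrt (v t i))⁻¹ * m t i) :
    ∑ t ∈ Finset.Icc 1 T, (1 - τ t) / τ t * ∑ i, m (t - 1) i * (θ (t - 1) i - θ t i)
      ≤ (1 - τlo) / τlo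
        * ∑ t ∈ Finset.Icc 1 (T - 1), a t * ∑ i, (m t i) ^ 2 * (Real.sqrt (v t i))⁻¹ := by
  have hsplit : Finset.Icc 1 T = insert 1 (Finset.Ioc 1 T) := by
    rw [Finset.Icc_eq_cons_Ioc hT, Finset.cons_eq_insert]
  rw [hsplit, Finset.sum_insert (by simp)]
  have h1 : (1 - τ 1) / τ 1 * ∑ i, m (1 - 1) i * (θ (1 - 1) i - θ 1 i) = 0 := by
    simp [hm0]
  rw [h1, zero_add, Finset.mul_sum]
  -- reindex RHS sum over Icc 1 (T-1) to Ioc 1 T via s ↦ s+1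
  rw [show (Finset.Icc 1 (T - 1)) = (Finset.Ioc 1 T).image (· - 1) by
    ext s
    simp only [Finset.mem_Icc, Finset.mem_image, Finset.mem_Ioc]
    constructor
    · rintro ⟨h1s, h2s⟩
      exact ⟨s + 1, ⟨by omega, by omega⟩, by omega⟩
    · rintro ⟨t, ⟨h1t, h2t⟩, rfl⟩
      omega]
  rw [Finset.sum_image (by intro x hx y hy h; simp at hx hy; simp only at h; omega)]
  apply Finset.sum_le_sum
  intro t ht
  simp only [Finset.mem_Ioc] at ht
  have hs1 : 1 ≤ t - 1 := by omega
  have hs2 : t - 1 ≤ T - 1 := by omega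
  have hS : ∑ i, m (t - 1) i * (θ (t - 1) i - θ t i)
      = a (t - 1) * ∑ i, (m (t - 1) i) ^ 2 * (Real.sqrt (v (t - 1) i))⁻¹ := by
    rw [Finset.mul_sum]
    apply Finset.sum_congr rfl
    intro i _
    have := hθ (t - 1) hs1 hs2 i
    rw [show t - 1 + 1 = t by omega] at this
    rw [this]
    ring
  rw [hS]
  have hSnn : 0 ≤ a (t - 1) * ∑ i, (m (t - 1) i) ^ 2 * (Real.sqrt (v (t - 1) i))⁻¹ := by
    apply mul_nonneg (le_of_lt (ha _ hs1 hs2))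
    apply Finset.sum_nonneg
    intro i _
    exact mul_nonneg (sq_nonneg _) (inv_nonneg.mpr (Real.sqrt_nonneg _))
  apply mul_le_mul_of_nonneg_right _ hSnn
  have hτt := hτ t (by omega) (by omega)
  have hτtpos : 0 < τ t := lt_of_lt_of_le hτlo0 hτt.1
  rw [div_le_div_iff₀ hτtpos hτlo0]
  nlinarith [hτt.1, hτt.2]
end

section
/- Let d ≥ 1, T ≥ 1, let 0 < β < 1 and 0 < τ̲ ≤ 1 − β, let g_1,…,g_T ∈ ℝ^d, let τ_0, τ_1,…,τ_T ∈ [τ̲, 1 − β], and let m_0 = 0, m_t = (1 − τ_t) m_{t−1} + τ_t g_t. Let θ_1,…,θ_T, θ* ∈ ℝ^d, D ≥ 0 with |θ_{t,i} − θ*_i| ≤ D for all t and i, let v_1,…,v_{T−1} ∈ ℝ^d have strictly positive coordinates, and let α_1,…,α_{T−1} > 0. Then Σ_{t=1}^{T} (1/τ_t) ( ⟨m_t, θ_t − θ*⟩ − ⟨m_{t−1}, θ_{t−1} − θ*⟩ ) ≤ (1/τ_T) ⟨m_T, θ_T − θ*⟩ + ((1 − (β + τ̲))/(2 τ̲²))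 ( Σ_{t=1}^{T−1} (D²/α_t) Σ_i v_{t,i}^{1/2} + Σ_{t=1}^{T−1} α_t Σ_i m_{t,i}² v_{t,i}^{−1/2} ). -/
lemma key_step (d : ℕ) (β τlo : ℝ) (hτlo0 : 0 < τlo) (hτloβ : τlo ≤ 1 - β)
    (τ1 τ2 : ℝ) (h1 : τlo ≤ τ1) (h1' : τ1 ≤ 1 - β) (h2 : τlo ≤ τ2) (h2' : τ2 ≤ 1 - β)
    (mv θd : Fin d → ℝ) (D : ℝ) (hD : 0 ≤ D) (hθ : ∀ i, |θd i| ≤ D)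
    (vv : Fin d → ℝ) (hv : ∀ i, 0 < vv i) (a : ℝ) (ha : 0 < a) :
    (1 / τ1 - 1 / τ2) * ∑ i, mv i * θd i
      ≤ (1 - (β + τlo)) / (2 * τlo ^ 2)
        * (D ^ 2 / a * ∑ i, Real.sqrt (vv i) + a * ∑ i, (mv i) ^ 2 * (Real.sqrt (vv i))⁻¹) := by
  have hτ1 : 0 < τ1 := lt_of_lt_of_le hτlo0 h1
  have hτ2 : 0 < τ2 := lt_of_lt_of_le hτlo0 h2
  have hc0 : 0 ≤ 1 - (β + τlo) := by linarith
  have habs : |1 / τ1 - 1 / τ2| ≤ (1 - (β + τlo)) / τlo ^ 2 := by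
    rw [div_sub_div _ _ hτ1.ne' hτ2.ne', abs_div, abs_of_pos (mul_pos hτ1 hτ2)]
    apply div_le_div₀ hc0 _ (by positivity) (by nlinarith)
    rw [abs_le]; constructor <;> nlinarith
  have young : ∀ x s : ℝ, 0 ≤ x → 0 < s →
      x * D ≤ D ^ 2 / (2 * a) * s + a / 2 * x ^ 2 * s⁻¹ := by
    intro x s hx hs
    have e : D ^ 2 / (2 * a) * s + a / 2 * x ^ 2 * s⁻¹ - x * D
        = (a * x - D * s) ^ 2 / (2 * a * s) := by
      field_simp
      ring
    nlinarith [div_nonneg (sq_nonneg (a * x - D * s)) (by positivity : (0:ℝ) ≤ 2 * a * s)]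
  have hpt : ∀ i, |mv i * θd i| ≤ D ^ 2 / (2 * a) * Real.sqrt (vv i)
      + a / 2 * (mv i) ^ 2 * (Real.sqrt (vv i))⁻¹ := by
    intro i
    have hs : 0 < Real.sqrt (vv i) := Real.sqrt_pos.mpr (hv i)
    have h1 : |mv i * θd i| ≤ |mv i| * D := by
      rw [abs_mul]; exact mul_le_mul_of_nonneg_left (hθ i) (abs_nonneg _)
    refine h1.trans ?_
    have := young |mv i| (Real.sqrt (vv i)) (abs_nonneg _) hs
    rwa [sq_abs] at this
  have hS : |∑ i, mv i * θd i| ≤ ∑ i, (D ^ 2 / (2 * a) * Real.sqrt (vv i)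
      + a / 2 * (mv i) ^ 2 * (Real.sqrt (vv i))⁻¹) :=
    (Finset.abs_sum_le_sum_abs _ _).trans (Finset.sum_le_sum fun i _ => hpt i)
  have hB : 0 ≤ ∑ i, (D ^ 2 / (2 * a) * Real.sqrt (vv i)
      + a / 2 * (mv i) ^ 2 * (Real.sqrt (vv i))⁻¹) :=
    le_trans (abs_nonneg _) hS
  calc (1 / τ1 - 1 / τ2) * ∑ i, mv i * θd i
      ≤ |(1 / τ1 - 1 / τ2) * ∑ i, mv i * θd i| := le_abs_self _
    _ = |1 / τ1 - 1 / τ2| * |∑ i, mv i * θd i| := abs_mul _ _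
    _ ≤ (1 - (β + τlo)) / τlo ^ 2 * ∑ i, (D ^ 2 / (2 * a) * Real.sqrt (vv i)
        + a / 2 * (mv i) ^ 2 * (Real.sqrt (vv i))⁻¹) :=
        mul_le_mul habs hS (abs_nonneg _) (by positivity)
    _ = (1 - (β + τlo)) / (2 * τlo ^ 2)
        * (D ^ 2 / a * ∑ i, Real.sqrt (vv i) + a * ∑ i, (mv i) ^ 2 * (Real.sqrt (vv i))⁻¹) := by
        rw [Finset.sum_add_distrib]
        simp only [mul_assoc, ← Finset.mul_sum]
        generalize (∑ i, Real.sqrt (vv i)) = X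
        generalize (∑ i, (mv i) ^ 2 * (Real.sqrt (vv i))⁻¹) = Y
        field_simp

/-- Bound of the term `R_{3,T}` in the AdaTerm regret analysis. -/

theorem adaterm_R3_bound
    (d T : ℕ) (hd : 1 ≤ d) (hT : 1 ≤ T)
    (β τlo : ℝ) (hβ0 : 0 < β) (hβ1 : β < 1) (hτlo0 : 0 < τlo) (hτloβ : τlo ≤ 1 - β)
    (g : ℕ → Fin d → ℝ) (τ : ℕ → ℝ)
    (hτ : ∀ t, t ≤ T → τlo ≤ τ t ∧ τ t ≤ 1 - β)
    (m : ℕ → Fin d → ℝ) (hm0 : m 0 = 0)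
    (hm : ∀ t, 1 ≤ t → t ≤ T → ∀ i, m t i = (1 - τ t) * m (t - 1) i + τ t * g t i)
    (θ : ℕ → Fin d → ℝ) (θs : Fin d → ℝ) (D : ℝ) (hD : 0 ≤ D)
    (hθ : ∀ t, 1 ≤ t → t ≤ T → ∀ i, |θ t i - θs i| ≤ D)
    (v : ℕ → Fin d → ℝ) (hv : ∀ t, 1 ≤ t → t ≤ T - 1 → ∀ i, 0 < v t i)
    (a : ℕ → ℝ) (ha : ∀ t, 1 ≤ t → t ≤ T - 1 → 0 < a t) :
    ∑ t ∈ Finset.Icc 1 T,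
        (1 / τ t) * ((∑ i, m t i * (θ t i - θs i))
          - ∑ i, m (t - 1) i * (θ (t - 1) i - θs i))
      ≤ (1 / τ T) * ∑ i, m T i * (θ T i - θs i)
        + (1 - (β + τlo)) / (2 * τlo ^ 2)
          * ((∑ t ∈ Finset.Icc 1 (T - 1), D ^ 2 / a t * ∑ i, Real.sqrt (v t i))
            + ∑ t ∈ Finset.Icc 1 (T - 1), a t * ∑ i, (m t i) ^ 2 * (Real.sqrt (v t i))⁻¹) := by
  clear hd hm
  induction T, hT using Nat.le_induction with
  | base =>
      simp only [show (1:ℕ) - 1 = 0 from rfl, Finset.Icc_self, Finset.sum_singleton,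
        show Finset.Icc 1 0 = ∅ from rfl, Finset.sum_empty, hm0]
      simp
  | succ n hn ih =>
      have hτ' : ∀ t, t ≤ n → τlo ≤ τ t ∧ τ t ≤ 1 - β := fun t ht => hτ t (by omega)
      have hθ' : ∀ t, 1 ≤ t → t ≤ n → ∀ i, |θ t i - θs i| ≤ D :=
        fun t h1 h2 i => hθ t h1 (by omega) i
      have hv' : ∀ t, 1 ≤ t → t ≤ n - 1 → ∀ i, 0 < v t i :=
        fun t h1 h2 i => hv t h1 (by omega) i
      have ha' : ∀ t, 1 ≤ t → t ≤ n - 1 → 0 < a t := fun t h1 h2 => ha t h1 (by omega)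
      have IH := ih hτ' hθ' hv' ha'
      obtain ⟨k, rfl⟩ : ∃ k, n = k + 1 := ⟨n - 1, by omega⟩
      simp only [Nat.add_sub_cancel] at IH ⊢
      rw [Finset.sum_Icc_succ_top (by omega : 1 ≤ k + 1 + 1)]
      conv_rhs => rw [Finset.sum_Icc_succ_top (by omega : 1 ≤ k + 1),
        Finset.sum_Icc_succ_top (by omega : 1 ≤ k + 1)]
      simp only [Nat.add_sub_cancel]
      have key := key_step d β τlo hτlo0 hτloβ (τ (k + 1)) (τ (k + 1 + 1))
        (hτ (k + 1) (by omega)).1 (hτ (k + 1) (by omega)).2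
        (hτ (k + 1 + 1) (by omega)).1 (hτ (k + 1 + 1) (by omega)).2
        (m (k + 1)) (fun i => θ (k + 1) i - θs i) D hD
        (fun i => hθ (k + 1) (by omega) (by omega) i)
        (v (k + 1)) (fun i => hv (k + 1) (by omega) (by omega) i)
        (a (k + 1)) (ha (k + 1) (by omega) (by omega))
      set S1 := ∑ i, m (k + 1) i * (θ (k + 1) i - θs i) with hS1
      set S2 := ∑ i, m (k + 1 + 1) i * (θ (k + 1 + 1) i - θs i) with hS2
      set A := ∑ t ∈ Finset.Icc 1 k, D ^ 2 / a t * ∑ i, Real.sqrt (v t i) with hA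
      set B := ∑ t ∈ Finset.Icc 1 k, a t * ∑ i, (m t i) ^ 2 * (Real.sqrt (v t i))⁻¹ with hB
      set X := D ^ 2 / a (k + 1) * ∑ i, Real.sqrt (v (k + 1) i) with hX
      set Y := a (k + 1) * ∑ i, (m (k + 1) i) ^ 2 * (Real.sqrt (v (k + 1) i))⁻¹ with hY
      set c := (1 - (β + τlo)) / (2 * τlo ^ 2) with hc
      have hring : (1 / τ (k + 1)) * S1 + (1 / τ (k + 1 + 1)) * (S2 - S1)
          = (1 / τ (k + 1 + 1)) * S2 + (1 / τ (k + 1) - 1 / τ (k + 1 + 1)) * S1 := by ring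
      have hdist : c * ((A + X) + (B + Y)) = c * (A + B) + c * (X + Y) := by ring
      linarith [IH, key, hring, hdist]
end

section
/- Let d ≥ 1, T ≥ 1, let 0 < β < 1 and 0 < τ̲ ≤ 1 − β, let g_1,…,g_T ∈ ℝ^d, let τ_1,…,τ_T ∈ [τ̲, 1 − β], and let m_0 = 0, m_t = (1 − τ_t) m_{t−1} + τ_t g_t. Then for every 1 ≤ t ≤ T and every coordinate i: m_{t,i}² ≤ ((1 − β)²/τ̲) Σ_{k=1}^{t} (1 − τ̲)^{t−k} g_{k,i}². -/
/-- Coordinatewise squared-momentum bound in the AdaTerm regret analysis: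
`m_{t,i}² ≤ ((1-β)²/τ̲) Σ_{k=1}^{t} (1-τ̲)^{t-k} g_{k,i}²`. -/
theorem adaterm_momentum_sq_bound
    (d T : ℕ) (hd : 1 ≤ d) (hT : 1 ≤ T)
    (β τlo : ℝ) (hβ0 : 0 < β) (hβ1 : β < 1) (hτlo0 : 0 < τlo) (hτloβ : τlo ≤ 1 - β)
    (g : ℕ → Fin d → ℝ) (τ : ℕ → ℝ)
    (hτ : ∀ t, 1 ≤ t → t ≤ T → τlo ≤ τ t ∧ τ t ≤ 1 - β)
    (m : ℕ → Fin d → ℝ) (hm0 : m 0 = 0)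
    (hm : ∀ t, 1 ≤ t → t ≤ T → ∀ i, m t i = (1 - τ t) * m (t - 1) i + τ t * g t i) :
    ∀ t, 1 ≤ t → t ≤ T → ∀ i,
      (m t i) ^ 2
        ≤ (1 - β) ^ 2 / τlo * ∑ k ∈ Finset.Icc 1 t, (1 - τlo) ^ (t - k) * (g k i) ^ 2 := by
  set C : ℝ := (1 - β) ^ 2 / τlo with hCdef
  have hτlo1 : τlo ≤ 1 := by linarith
  have hC1 : (1 : ℝ) - β ≤ C := by
    rw [hCdef, le_div_iff₀ hτlo0]
    nlinarith
  have hC0 : 0 ≤ C := le_trans (by linarith) hC1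
  intro t
  induction t with
  | zero => intro h; omega
  | succ n ih =>
    intro _ hle i
    have hmn := hm (n+1) (by omega) hle i
    simp only [Nat.add_sub_cancel] at hmn
    have hτn := hτ (n+1) (by omega) hle
    by_cases hn : n = 0
    · subst hn
      rw [hmn, hm0]
      simp only [Pi.zero_apply, mul_zero, zero_add]
      rw [show Finset.Icc 1 1 = {1} by rfl, Finset.sum_singleton]
      simp only [Nat.sub_self, pow_zero, one_mul]
      have h1 : τ 1 ≤ 1 - β := hτn.2
      have h2 : τlo ≤ τ 1 := hτn.1
      have : (τ 1)^2 ≤ C := by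
        calc (τ 1)^2 ≤ (1-β)*(τ 1) := by nlinarith
        _ ≤ (1-β)*(1-β) := by nlinarith
        _ ≤ C * 1 := by rw [mul_one]; nlinarith [hC1]
        _ = C := mul_one C
      nlinarith [sq_nonneg (g 1 i), sq_nonneg (τ 1 * g 1 i)]
    · have hn1 : 1 ≤ n := by omega
      have ihn := ih hn1 (by omega) i
      have hSnn : 0 ≤ ∑ k ∈ Finset.Icc 1 n, (1 - τlo) ^ (n - k) * (g k i) ^ 2 := by
        apply Finset.sum_nonneg
        intro k hk
        exact mul_nonneg (pow_nonneg (by linarith) _) (sq_nonneg _)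
      have hconv : (m (n+1) i)^2 ≤ (1 - τ (n+1)) * (m n i)^2 + τ (n+1) * (g (n+1) i)^2 := by
        rw [hmn]
        have hτp : 0 ≤ τ (n+1) := by linarith [hτn.1]
        have hτq : 0 ≤ 1 - τ (n+1) := by linarith [hτn.2]
        nlinarith [mul_nonneg (mul_nonneg hτp hτq) (sq_nonneg (m n i - g (n+1) i))]
      have hS : ∑ k ∈ Finset.Icc 1 (n+1), (1-τlo)^(n+1-k) * (g k i)^2
          = (1-τlo) * ∑ k ∈ Finset.Icc 1 n, (1-τlo)^(n-k) * (g k i)^2 + (g (n+1) i)^2 := by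
        rw [Finset.sum_Icc_succ_top (by omega : 1 ≤ n + 1), Finset.mul_sum]
        congr 1
        · apply Finset.sum_congr rfl
          intro k hk
          have hk' : k ≤ n := (Finset.mem_Icc.mp hk).2
          rw [show n + 1 - k = (n - k) + 1 by omega, pow_succ]
          ring
        · simp
      rw [hS]
      have h1 : (1 - τ (n+1)) * (m n i)^2 ≤ (1 - τlo) * (C * ∑ k ∈ Finset.Icc 1 n, (1-τlo)^(n-k) * (g k i)^2) := by
        calc (1 - τ (n+1)) * (m n i)^2
            ≤ (1 - τ (n+1)) * (C * ∑ k ∈ Finset.Icc 1 n, (1-τlo)^(n-k) * (g k i)^2) := by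
              apply mul_le_mul_of_nonneg_left ihn (by linarith [hτn.2])
          _ ≤ (1 - τlo) * (C * ∑ k ∈ Finset.Icc 1 n, (1-τlo)^(n-k) * (g k i)^2) := by
              apply mul_le_mul_of_nonneg_right (by linarith [hτn.1]) (mul_nonneg hC0 hSnn)
      have h2 : τ (n+1) * (g (n+1) i)^2 ≤ C * (g (n+1) i)^2 := by
        apply mul_le_mul_of_nonneg_right (le_trans hτn.2 hC1) (sq_nonneg _)
      calc (m (n+1) i)^2 ≤ (1 - τ (n+1)) * (m n i)^2 + τ (n+1) * (g (n+1) i)^2 := hconv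
        _ ≤ (1 - τlo) * (C * ∑ k ∈ Finset.Icc 1 n, (1-τlo)^(n-k) * (g k i)^2) + C * (g (n+1) i)^2 := by
            linarith
        _ = C * ((1-τlo) * ∑ k ∈ Finset.Icc 1 n, (1-τlo)^(n-k) * (g k i)^2 + (g (n+1) i)^2) := by
            ring
end

section
/- Let d ≥ 1, T ≥ 2, let 0 < β < 1, 0 < τ̲ ≤ 1 − β, ε > 0, α > 0, and let α_t = α/√t. Let g_1,…,g_{T−1} ∈ ℝ^d, let τ_1,…,τ_{T−1} ∈ [τ̲, 1 − β], let m_0 = 0, m_t = (1 − τ_t) m_{t−1} + τ_t g_t, and let v̂_1,…,v̂_{T−1} ∈ ℝ^d satisfy v̂_{t,i} ≥ ε² for all t, i. Then Σ_{t=1}^{T−1} α_t Σ_i m_{t,i}² v̂_{t,i}^{−1/2} ≤ (α (1 − β)²/(ε τ̲²)) · sqrt(1 + log(T − 1)) · Σ_{i=1}^{d} sqrt( Σ_{t=1}^{T−1} g_{t,i}⁴ ). -/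
private lemma geom_aux {r : ℝ} (h0 : 0 ≤ r) (h1 : r < 1) (n : ℕ) :
    ∑ i ∈ Finset.range n, r ^ i ≤ (1 - r)⁻¹ := by
  have hlt : (0:ℝ) < 1 - r := by linarith
  rw [geom_sum_eq (by intro h; rw [h] at h1; exact lt_irrefl _ h1)]
  rw [div_le_iff_of_neg (by linarith : r - 1 < 0)]
  have h2 : (1 - r)⁻¹ * (r - 1) = -1 := by field_simp; ring
  have h3 : (0:ℝ) ≤ r ^ n := pow_nonneg h0 n
  linarith

private lemma geom_Icc_aux {r : ℝ} (h0 : 0 ≤ r) (h1 : r < 1) (s N : ℕ) :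
    ∑ t ∈ Finset.Icc s N, r ^ (t - s) ≤ (1 - r)⁻¹ := by
  have hre : ∑ t ∈ Finset.Icc s N, r ^ (t - s)
      = ∑ k ∈ Finset.range (N + 1 - s), r ^ k := by
    rw [← Finset.Ico_add_one_right_eq_Icc, Finset.sum_Ico_eq_sum_range]
    exact Finset.sum_congr rfl (fun k _ => by congr 1; omega)
  rw [hre]; exact geom_aux h0 h1 _

/-- Double-sum swap plus geometric bound. -/
private lemma swap_bound {r : ℝ} (hr0 : 0 ≤ r) (hr1 : r < 1) (N : ℕ)
    (a : ℕ → ℝ) (ha : ∀ t, 0 ≤ a t) :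
    ∑ t ∈ Finset.Icc 1 N, (Real.sqrt t)⁻¹ * ∑ s ∈ Finset.Icc 1 t, r ^ (t - s) * a s
      ≤ (1 - r)⁻¹ * ∑ s ∈ Finset.Icc 1 N, (Real.sqrt s)⁻¹ * a s := by
  have hswap : ∑ t ∈ Finset.Icc 1 N, ∑ s ∈ Finset.Icc 1 t,
        (Real.sqrt t)⁻¹ * (r ^ (t - s) * a s)
      = ∑ s ∈ Finset.Icc 1 N, ∑ t ∈ Finset.Icc s N,
        (Real.sqrt t)⁻¹ * (r ^ (t - s) * a s) := by
    refine Finset.sum_comm' (fun t s => ?_)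
    simp only [Finset.mem_Icc]; omega
  calc ∑ t ∈ Finset.Icc 1 N, (Real.sqrt t)⁻¹ * ∑ s ∈ Finset.Icc 1 t, r ^ (t - s) * a s
      = ∑ s ∈ Finset.Icc 1 N, ∑ t ∈ Finset.Icc s N,
          (Real.sqrt t)⁻¹ * (r ^ (t - s) * a s) := by
        simp only [Finset.mul_sum]; exact hswap
    _ ≤ ∑ s ∈ Finset.Icc 1 N, ((Real.sqrt s)⁻¹ * a s) * (1 - r)⁻¹ := by
        refine Finset.sum_le_sum (fun s hs => ?_)
        have hs1 : 1 ≤ s := (Finset.mem_Icc.mp hs).1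
        have hspos : (0:ℝ) < Real.sqrt s := Real.sqrt_pos.mpr (by positivity)
        calc ∑ t ∈ Finset.Icc s N, (Real.sqrt t)⁻¹ * (r ^ (t - s) * a s)
            ≤ ∑ t ∈ Finset.Icc s N, (Real.sqrt s)⁻¹ * (r ^ (t - s) * a s) := by
              refine Finset.sum_le_sum (fun t ht => ?_)
              have hst : s ≤ t := (Finset.mem_Icc.mp ht).1
              have h1 : (Real.sqrt t)⁻¹ ≤ (Real.sqrt s)⁻¹ := by
                apply inv_anti₀ hspos
                exact Real.sqrt_le_sqrt (by exact_mod_cast hst)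
              exact mul_le_mul_of_nonneg_right h1
                (mul_nonneg (pow_nonneg hr0 _) (ha s))
          _ = ((Real.sqrt s)⁻¹ * a s) * ∑ t ∈ Finset.Icc s N, r ^ (t - s) := by
              rw [Finset.mul_sum]; exact Finset.sum_congr rfl (fun t _ => by ring)
          _ ≤ ((Real.sqrt s)⁻¹ * a s) * (1 - r)⁻¹ := by
              refine mul_le_mul_of_nonneg_left (geom_Icc_aux hr0 hr1 s N) ?_
              have := ha s; positivity
    _ = (1 - r)⁻¹ * ∑ s ∈ Finset.Icc 1 N, (Real.sqrt s)⁻¹ * a s := by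
        rw [Finset.mul_sum]; exact Finset.sum_congr rfl (fun s _ => by ring)

/-- Unrolling the one-step recursive inequality. -/
private lemma mom_bound {β τlo : ℝ} (hτr : 0 ≤ 1 - τlo) (hβ : 0 ≤ 1 - β)
    (N : ℕ) (a u : ℕ → ℝ) (hu0 : u 0 = 0)
    (hrec : ∀ t, 1 ≤ t → t ≤ N → u t ≤ (1 - τlo) * u (t - 1) + (1 - β) * a t) :
    ∀ t, t ≤ N → u t ≤ (1 - β) * ∑ s ∈ Finset.Icc 1 t, (1 - τlo) ^ (t - s) * a s := by
  intro t
  induction t with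
  | zero => intro _; simp [hu0]
  | succ t ih =>
    intro htN
    have h1 := hrec (t + 1) (by omega) htN
    have h2 := ih (by omega)
    calc u (t + 1) ≤ (1 - τlo) * u t + (1 - β) * a (t + 1) := h1
      _ ≤ (1 - τlo) * ((1 - β) * ∑ s ∈ Finset.Icc 1 t, (1 - τlo) ^ (t - s) * a s)
            + (1 - β) * a (t + 1) := by nlinarith [h2]
      _ = (1 - β) * ∑ s ∈ Finset.Icc 1 (t + 1), (1 - τlo) ^ (t + 1 - s) * a s := by
          rw [Finset.sum_Icc_succ_top (by omega : 1 ≤ t + 1)]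
          have : ∑ s ∈ Finset.Icc 1 t, (1 - τlo) ^ (t + 1 - s) * a s
              = ∑ s ∈ Finset.Icc 1 t, (1 - τlo) * ((1 - τlo) ^ (t - s) * a s) := by
            refine Finset.sum_congr rfl (fun s hs => ?_)
            have hst : s ≤ t := (Finset.mem_Icc.mp hs).2
            have : t + 1 - s = (t - s) + 1 := by omega
            rw [this, pow_succ]; ring
          rw [this, ← Finset.mul_sum]
          norm_num
          ring

/-- Bound on `Σ_{t=1}^{T-1} α_t ‖m_t‖²_{v̂_t^{-1/2}}` in the AdaTerm regret analysis,
with scheduled learning rate `α_t = α/√t` and scale estimates bounded below by `ε²`. -/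
theorem adaterm_momentum_norm_sum_bound
    (d T : ℕ) (hd : 1 ≤ d) (hT : 2 ≤ T)
    (β τlo ε α : ℝ) (hβ0 : 0 < β) (hβ1 : β < 1)
    (hτlo0 : 0 < τlo) (hτloβ : τlo ≤ 1 - β) (hε : 0 < ε) (hα : 0 < α)
    (g : ℕ → Fin d → ℝ) (τ : ℕ → ℝ)
    (hτ : ∀ t, 1 ≤ t → t ≤ T - 1 → τlo ≤ τ t ∧ τ t ≤ 1 - β)
    (m : ℕ → Fin d → ℝ) (hm0 : m 0 = 0)
    (hm : ∀ t, 1 ≤ t → t ≤ T - 1 → ∀ i, m t i = (1 - τ t) * m (t - 1) i + τ t * g t i)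
    (v : ℕ → Fin d → ℝ) (hv : ∀ t, 1 ≤ t → t ≤ T - 1 → ∀ i, ε ^ 2 ≤ v t i) :
    ∑ t ∈ Finset.Icc 1 (T - 1),
        (α / Real.sqrt t) * ∑ i, (m t i) ^ 2 * (Real.sqrt (v t i))⁻¹
      ≤ α * (1 - β) ^ 2 / (ε * τlo ^ 2) * Real.sqrt (1 + Real.log ((T : ℝ) - 1))
          * ∑ i, Real.sqrt (∑ t ∈ Finset.Icc 1 (T - 1), (g t i) ^ 4) := by
  set N := T - 1 with hNdef
  have hN1 : 1 ≤ N := by omega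
  have hβ' : (0:ℝ) < 1 - β := by linarith
  have hr0 : (0:ℝ) ≤ 1 - τlo := by linarith
  have hr1 : (1:ℝ) - τlo < 1 := by linarith
  -- per-coordinate bound on `∑_t (√t)⁻¹ m_{t,i}²`
  have key : ∀ i, ∑ t ∈ Finset.Icc 1 N, (Real.sqrt t)⁻¹ * (m t i) ^ 2
      ≤ (1 - β) * τlo⁻¹ * ∑ s ∈ Finset.Icc 1 N, (Real.sqrt s)⁻¹ * (g s i) ^ 2 := by
    intro i
    have hmb := mom_bound hr0 (le_of_lt hβ') N (fun t => (g t i) ^ 2)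
      (fun t => (m t i) ^ 2) (by simp [hm0])
      (fun t ht1 htN => by
        have hτt := hτ t ht1 htN
        have hrecm := hm t ht1 htN i
        have hconv : ((1 - τ t) * m (t - 1) i + τ t * g t i) ^ 2
            ≤ (1 - τ t) * (m (t - 1) i) ^ 2 + τ t * (g t i) ^ 2 := by
          nlinarith [mul_nonneg (mul_nonneg (by linarith [hτt.1] : (0:ℝ) ≤ τ t)
            (by linarith [hτt.2] : (0:ℝ) ≤ 1 - τ t)) (sq_nonneg (m (t - 1) i - g t i))]
        have h1 : (1 - τ t) * (m (t - 1) i) ^ 2 ≤ (1 - τlo) * (m (t - 1) i) ^ 2 :=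
          mul_le_mul_of_nonneg_right (by linarith [hτt.1]) (sq_nonneg _)
        have h2 : τ t * (g t i) ^ 2 ≤ (1 - β) * (g t i) ^ 2 :=
          mul_le_mul_of_nonneg_right hτt.2 (sq_nonneg _)
        show m t i ^ 2 ≤ (1 - τlo) * m (t - 1) i ^ 2 + (1 - β) * g t i ^ 2
        rw [hrecm]; linarith)
    calc ∑ t ∈ Finset.Icc 1 N, (Real.sqrt t)⁻¹ * (m t i) ^ 2
        ≤ ∑ t ∈ Finset.Icc 1 N, (Real.sqrt t)⁻¹
            * ((1 - β) * ∑ s ∈ Finset.Icc 1 t, (1 - τlo) ^ (t - s) * (g s i) ^ 2) := by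
          refine Finset.sum_le_sum (fun t ht => ?_)
          refine mul_le_mul_of_nonneg_left (hmb t (Finset.mem_Icc.mp ht).2) ?_
          positivity
      _ = (1 - β) * ∑ t ∈ Finset.Icc 1 N, (Real.sqrt t)⁻¹
            * ∑ s ∈ Finset.Icc 1 t, (1 - τlo) ^ (t - s) * (g s i) ^ 2 := by
          rw [Finset.mul_sum]; exact Finset.sum_congr rfl (fun t _ => by ring)
      _ ≤ (1 - β) * ((1 - (1 - τlo))⁻¹
            * ∑ s ∈ Finset.Icc 1 N, (Real.sqrt s)⁻¹ * (g s i) ^ 2) := by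
          refine mul_le_mul_of_nonneg_left
            (swap_bound hr0 hr1 N _ (fun t => sq_nonneg _)) (le_of_lt hβ')
      _ = (1 - β) * τlo⁻¹ * ∑ s ∈ Finset.Icc 1 N, (Real.sqrt s)⁻¹ * (g s i) ^ 2 := by
          rw [show (1:ℝ) - (1 - τlo) = τlo by ring]; ring
  -- harmonic sum bound
  have hharm : ∑ s ∈ Finset.Icc 1 N, ((s:ℝ))⁻¹ ≤ 1 + Real.log N := by
    have h1 : ∑ s ∈ Finset.Icc 1 N, ((s:ℝ))⁻¹ = (harmonic N : ℝ) := by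
      rw [harmonic]
      push_cast
      rw [← Finset.Ico_add_one_right_eq_Icc, Finset.sum_Ico_eq_sum_range]
      exact Finset.sum_congr (by congr 1) (fun k _ => by push_cast; ring_nf)
    rw [h1]; exact harmonic_le_one_add_log N
  have hlog0 : (0:ℝ) ≤ 1 + Real.log N := by
    have : (1:ℝ) ≤ (N:ℝ) := by exact_mod_cast hN1
    have := Real.log_nonneg this
    linarith
  -- Cauchy–Schwarz per coordinate
  have hCS : ∀ i, ∑ s ∈ Finset.Icc 1 N, (Real.sqrt s)⁻¹ * (g s i) ^ 2
      ≤ Real.sqrt (1 + Real.log N)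
        * Real.sqrt (∑ t ∈ Finset.Icc 1 N, (g t i) ^ 4) := by
    intro i
    have hsq : (∑ s ∈ Finset.Icc 1 N, (Real.sqrt s)⁻¹ * (g s i) ^ 2) ^ 2
        ≤ (∑ s ∈ Finset.Icc 1 N, ((Real.sqrt s)⁻¹) ^ 2)
          * ∑ s ∈ Finset.Icc 1 N, ((g s i) ^ 2) ^ 2 :=
      Finset.sum_mul_sq_le_sq_mul_sq _ _ _
    have hA : ∑ s ∈ Finset.Icc 1 N, ((Real.sqrt s)⁻¹) ^ 2
        = ∑ s ∈ Finset.Icc 1 N, ((s:ℝ))⁻¹ := by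
      refine Finset.sum_congr rfl (fun s _ => ?_)
      rw [inv_pow, Real.sq_sqrt (by positivity)]
    have hB : ∑ s ∈ Finset.Icc 1 N, ((g s i) ^ 2) ^ 2
        = ∑ s ∈ Finset.Icc 1 N, (g s i) ^ 4 := by
      refine Finset.sum_congr rfl (fun s _ => by ring)
    have hL0 : 0 ≤ ∑ s ∈ Finset.Icc 1 N, (Real.sqrt s)⁻¹ * (g s i) ^ 2 :=
      Finset.sum_nonneg (fun s _ => by positivity)
    have := Real.sqrt_le_sqrt hsq
    rw [Real.sqrt_sq hL0] at this
    refine this.trans ?_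
    rw [hA, hB, Real.sqrt_mul (Finset.sum_nonneg (fun s _ => by positivity))]
    refine mul_le_mul_of_nonneg_right (Real.sqrt_le_sqrt hharm) (Real.sqrt_nonneg _)
  -- first bound: replace `(√v)⁻¹` by `ε⁻¹` and rearrange
  have step1 : ∑ t ∈ Finset.Icc 1 N,
        (α / Real.sqrt t) * ∑ i, (m t i) ^ 2 * (Real.sqrt (v t i))⁻¹
      ≤ α * ε⁻¹ * ∑ i, ∑ t ∈ Finset.Icc 1 N, (Real.sqrt t)⁻¹ * (m t i) ^ 2 := by
    have : ∀ t ∈ Finset.Icc 1 N,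
        (α / Real.sqrt t) * ∑ i, (m t i) ^ 2 * (Real.sqrt (v t i))⁻¹
          ≤ ∑ i, α * ε⁻¹ * ((Real.sqrt t)⁻¹ * (m t i) ^ 2) := by
      intro t ht
      obtain ⟨ht1, htN⟩ := Finset.mem_Icc.mp ht
      have htpos : (0:ℝ) < Real.sqrt t := Real.sqrt_pos.mpr (by positivity)
      rw [Finset.mul_sum]
      refine Finset.sum_le_sum (fun i _ => ?_)
      have hvb : ε ≤ Real.sqrt (v t i) := by
        have := hv t ht1 htN i
        calc ε = Real.sqrt (ε ^ 2) := (Real.sqrt_sq hε.le).symm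
          _ ≤ Real.sqrt (v t i) := Real.sqrt_le_sqrt this
      have hinv : (Real.sqrt (v t i))⁻¹ ≤ ε⁻¹ := inv_anti₀ hε hvb
      calc (α / Real.sqrt t) * ((m t i) ^ 2 * (Real.sqrt (v t i))⁻¹)
          ≤ (α / Real.sqrt t) * ((m t i) ^ 2 * ε⁻¹) := by
            refine mul_le_mul_of_nonneg_left
              (mul_le_mul_of_nonneg_left hinv (sq_nonneg _)) (by positivity)
        _ = α * ε⁻¹ * ((Real.sqrt t)⁻¹ * (m t i) ^ 2) := by
            rw [div_eq_mul_inv]; ring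
    refine (Finset.sum_le_sum this).trans_eq ?_
    rw [Finset.sum_comm]
    rw [Finset.mul_sum]
    exact Finset.sum_congr rfl (fun i _ => by rw [Finset.mul_sum])
  -- combine
  have hc1 : (0:ℝ) ≤ α * ε⁻¹ := by positivity
  have step2 : α * ε⁻¹ * ∑ i, ∑ t ∈ Finset.Icc 1 N, (Real.sqrt t)⁻¹ * (m t i) ^ 2
      ≤ α * ε⁻¹ * ((1 - β) * τlo⁻¹ * (Real.sqrt (1 + Real.log N)
          * ∑ i, Real.sqrt (∑ t ∈ Finset.Icc 1 N, (g t i) ^ 4))) := by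
    refine mul_le_mul_of_nonneg_left ?_ hc1
    calc ∑ i, ∑ t ∈ Finset.Icc 1 N, (Real.sqrt t)⁻¹ * (m t i) ^ 2
        ≤ ∑ i, (1 - β) * τlo⁻¹
            * ∑ s ∈ Finset.Icc 1 N, (Real.sqrt s)⁻¹ * (g s i) ^ 2 :=
          Finset.sum_le_sum (fun i _ => key i)
      _ ≤ ∑ i, (1 - β) * τlo⁻¹ * (Real.sqrt (1 + Real.log N)
            * Real.sqrt (∑ t ∈ Finset.Icc 1 N, (g t i) ^ 4)) := by
          refine Finset.sum_le_sum (fun i _ => ?_)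
          refine mul_le_mul_of_nonneg_left (hCS i) (by positivity)
      _ = (1 - β) * τlo⁻¹ * (Real.sqrt (1 + Real.log N)
            * ∑ i, Real.sqrt (∑ t ∈ Finset.Icc 1 N, (g t i) ^ 4)) := by
          rw [Finset.mul_sum, Finset.mul_sum]
  have hNcast : ((N:ℝ)) = (T:ℝ) - 1 := by
    rw [hNdef]; push_cast [Nat.cast_sub (by omega : 1 ≤ T)]; ring
  have hsum0 : (0:ℝ) ≤ ∑ i, Real.sqrt (∑ t ∈ Finset.Icc 1 N, (g t i) ^ 4) :=
    Finset.sum_nonneg (fun i _ => Real.sqrt_nonneg _)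
  -- final constant comparison
  have hconst : α * ε⁻¹ * ((1 - β) * τlo⁻¹) ≤ α * (1 - β) ^ 2 / (ε * τlo ^ 2) := by
    rw [div_eq_mul_inv, mul_inv]
    have h1 : (1 - β) * τlo⁻¹ ≤ (1 - β) ^ 2 * (τlo ^ 2)⁻¹ := by
      rw [sq, sq, mul_inv]
      have hτβ1 : 1 ≤ (1 - β) * τlo⁻¹ := by
        rw [← div_eq_mul_inv, le_div_iff₀ hτlo0]; linarith
      nlinarith [mul_nonneg (le_of_lt hβ') (inv_nonneg.mpr hτlo0.le)]
    calc α * ε⁻¹ * ((1 - β) * τlo⁻¹)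
        ≤ α * ε⁻¹ * ((1 - β) ^ 2 * (τlo ^ 2)⁻¹) :=
          mul_le_mul_of_nonneg_left h1 hc1
      _ = α * (1 - β) ^ 2 * (ε⁻¹ * (τlo ^ 2)⁻¹) := by ring
  refine (step1.trans step2).trans ?_
  rw [hNcast] at *
  have hfinal : α * ε⁻¹ * ((1 - β) * τlo⁻¹ * (Real.sqrt (1 + Real.log ((T:ℝ) - 1))
        * ∑ i, Real.sqrt (∑ t ∈ Finset.Icc 1 N, (g t i) ^ 4)))
      = α * ε⁻¹ * ((1 - β) * τlo⁻¹) * (Real.sqrt (1 + Real.log ((T:ℝ) - 1))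
        * ∑ i, Real.sqrt (∑ t ∈ Finset.Icc 1 N, (g t i) ^ 4)) := by ring
  rw [hfinal]
  rw [mul_assoc (α * (1 - β) ^ 2 / (ε * τlo ^ 2))]
  exact mul_le_mul_of_nonneg_right hconst
    (mul_nonneg (Real.sqrt_nonneg _) hsum0)
end

section
/- Let d ≥ 1, T ≥ 1, let 0 < β < 1, 0 < τ̲ ≤ 1 − β, ε > 0, α_T > 0, D ≥ 0. Let g_1,…,g_T ∈ ℝ^d, let τ_1,…,τ_T ∈ [τ̲, 1 − β], let m_0 = 0, m_t = (1 − τ_t) m_{t−1} + τ_t g_t, let v_T ∈ ℝ^d with v_{T,i} ≥ ε² for all i, and let θ_T, θ* ∈ ℝ^d with |θ_{T,i} − θ*_i| ≤ D for all i. Then (1/τ_T) ⟨m_T, θ_T − θ*⟩ ≤ (1/τ_T) · (D²/(4 α_T)) · Σ_i v_{T,i}^{1/2} + ((1 − β)² α_T/(ε τ̲²)) Σ_{i=1}^{d} Σ_{k=1}^{T} (1 − τ̲)^{T−k} g_{k,i}². -/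
set_option maxHeartbeats 1000000


/-- Bound of the residual term `(1/τ_T)⟨m_T, θ_T - θ*⟩` in the AdaTerm regret analysis. -/
theorem adaterm_residual_term_bound
    (d T : ℕ) (hd : 1 ≤ d) (hT : 1 ≤ T)
    (β τlo ε aT D : ℝ) (hβ0 : 0 < β) (hβ1 : β < 1)
    (hτlo0 : 0 < τlo) (hτloβ : τlo ≤ 1 - β) (hε : 0 < ε) (haT : 0 < aT) (hD : 0 ≤ D)
    (g : ℕ → Fin d → ℝ) (τ : ℕ → ℝ)
    (hτ : ∀ t, 1 ≤ t → t ≤ T → τlo ≤ τ t ∧ τ t ≤ 1 - β)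
    (m : ℕ → Fin d → ℝ) (hm0 : m 0 = 0)
    (hm : ∀ t, 1 ≤ t → t ≤ T → ∀ i, m t i = (1 - τ t) * m (t - 1) i + τ t * g t i)
    (vT : Fin d → ℝ) (hvT : ∀ i, ε ^ 2 ≤ vT i)
    (θT θs : Fin d → ℝ) (hθ : ∀ i, |θT i - θs i| ≤ D) :
    (1 / τ T) * ∑ i, m T i * (θT i - θs i)
      ≤ (1 / τ T) * (D ^ 2 / (4 * aT)) * ∑ i, Real.sqrt (vT i)
        + (1 - β) ^ 2 * aT / (ε * τlo ^ 2)
          * ∑ i, ∑ k ∈ Finset.Icc 1 T, (1 - τlo) ^ (T - k) * (g k i) ^ 2 := by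
  obtain ⟨hτT1, hτT2⟩ := hτ T hT le_rfl
  have hτT0 : 0 < τ T := lt_of_lt_of_le hτlo0 hτT1
  have h1τ : (0:ℝ) ≤ 1 - τlo := by linarith
  set C : ℝ := (1 - β)^2 / τlo with hC
  -- key momentum bound
  have key : ∀ t, t ≤ T → ∀ i, (m t i)^2
      ≤ C * ∑ k ∈ Finset.Icc 1 t, (1 - τlo)^(t-k) * (g k i)^2 := by
    intro t
    induction t with
    | zero => intro _ i; simp [hm0]
    | succ n ih =>
      intro hn i
      have hn' : n ≤ T := by omega
      obtain ⟨ht1, ht2⟩ := hτ (n+1) (by omega) hn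
      have hτt0 : 0 < τ (n+1) := lt_of_lt_of_le hτlo0 ht1
      have hτt1 : τ (n+1) < 1 := by linarith
      have hrec := hm (n+1) (by omega) hn i
      simp only [Nat.add_sub_cancel] at hrec
      have hconv : (m (n+1) i)^2 ≤ (1 - τ (n+1)) * (m n i)^2 + τ (n+1) * (g (n+1) i)^2 := by
        rw [hrec]
        nlinarith [mul_nonneg (mul_nonneg hτt0.le (by linarith : (0:ℝ) ≤ 1 - τ (n+1)))
          (sq_nonneg (m n i - g (n+1) i))]
      have ihn := ih hn' i
      have hsum : ∑ k ∈ Finset.Icc 1 (n+1), (1 - τlo)^(n+1-k) * (g k i)^2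
          = (g (n+1) i)^2 + (1 - τlo) * ∑ k ∈ Finset.Icc 1 n, (1 - τlo)^(n-k) * (g k i)^2 := by
        rw [Finset.sum_Icc_succ_top (by omega), Finset.mul_sum]
        simp only [Nat.sub_self, pow_zero, one_mul]
        rw [add_comm]
        congr 1
        apply Finset.sum_congr rfl
        intro k hk
        simp only [Finset.mem_Icc] at hk
        rw [← mul_assoc, ← pow_succ']
        congr 2
        omega
      rw [hsum]
      set S : ℝ := ∑ k ∈ Finset.Icc 1 n, (1 - τlo)^(n-k) * (g k i)^2 with hS
      have hSnn : 0 ≤ S := by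
        apply Finset.sum_nonneg
        intro k _
        positivity
      have h1 : (1 - τ (n+1)) * (m n i)^2 ≤ (1 - τlo) * (C * S) := by
        have hmn : 0 ≤ (m n i)^2 := sq_nonneg _
        have h1a : (1 - τ (n+1)) * (m n i)^2 ≤ (1 - τlo) * (m n i)^2 := by nlinarith
        exact h1a.trans (mul_le_mul_of_nonneg_left ihn h1τ)
      have h2 : τ (n+1) * (g (n+1) i)^2 ≤ C * (g (n+1) i)^2 := by
        have hτC : τ (n+1) ≤ C := by
          rw [hC, le_div_iff₀ hτlo0]
          nlinarith
        nlinarith [sq_nonneg (g (n+1) i)]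
      have hring : (1 - τlo) * (C * S) + C * (g (n+1) i)^2
          = C * ((g (n+1) i)^2 + (1 - τlo) * S) := by ring
      linarith
  -- sqrt lower bound
  have sqrtv : ∀ i, ε ≤ Real.sqrt (vT i) := by
    intro i
    have h := hvT i
    calc ε = Real.sqrt (ε^2) := (Real.sqrt_sq hε.le).symm
    _ ≤ Real.sqrt (vT i) := Real.sqrt_le_sqrt h
  -- Young per coordinate
  have hyoung : ∀ i, m T i * (θT i - θs i)
      ≤ (D^2/(4*aT)) * Real.sqrt (vT i) + aT/ε * (m T i)^2 := by
    intro i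
    set s := Real.sqrt (vT i) with hs
    have hsε : ε ≤ s := sqrtv i
    have hs0 : 0 < s := hε.trans_le hsε
    have h1 : m T i * (θT i - θs i) ≤ |m T i| * D := by
      calc m T i * (θT i - θs i) ≤ |m T i * (θT i - θs i)| := le_abs_self _
      _ = |m T i| * |θT i - θs i| := abs_mul _ _
      _ ≤ |m T i| * D := mul_le_mul_of_nonneg_left (hθ i) (abs_nonneg _)
    refine h1.trans ?_
    have hA : |m T i| * D ≤ D^2/(4*aT) * s + aT/s * (m T i)^2 := by
      rw [div_mul_eq_mul_div, div_mul_eq_mul_div,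
        div_add_div _ _ (by positivity : (4*aT:ℝ) ≠ 0) hs0.ne',
        le_div_iff₀ (by positivity)]
      have habs : |m T i| ^ 2 = (m T i)^2 := sq_abs _
      have hexp : D^2 * s * s + 4 * aT * (aT * (m T i)^2) - |m T i| * D * (4 * aT * s)
          = (D * s - 2 * aT * |m T i|)^2 := by
        rw [← habs]; ring
      linarith [sq_nonneg (D * s - 2 * aT * |m T i|)]
    have hB : aT/s * (m T i)^2 ≤ aT/ε * (m T i)^2 := by
      have : aT/s ≤ aT/ε := div_le_div_of_nonneg_left haT.le hε hsε
      exact mul_le_mul_of_nonneg_right this (sq_nonneg _)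
    linarith
  -- sum everything
  set S2 : ℝ := ∑ i, ∑ k ∈ Finset.Icc 1 T, (1 - τlo)^(T-k) * (g k i)^2 with hS2
  have hS2nn : 0 ≤ S2 := by
    apply Finset.sum_nonneg; intro i _
    apply Finset.sum_nonneg; intro k _
    positivity
  have hsum1 : ∑ i, m T i * (θT i - θs i)
      ≤ (D^2/(4*aT)) * ∑ i, Real.sqrt (vT i) + aT/ε * ∑ i, (m T i)^2 := by
    rw [Finset.mul_sum, Finset.mul_sum, ← Finset.sum_add_distrib]
    exact Finset.sum_le_sum fun i _ => hyoung i
  have hsum2 : ∑ i, (m T i)^2 ≤ C * S2 := by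
    rw [hS2, Finset.mul_sum]
    exact Finset.sum_le_sum fun i _ => key T le_rfl i
  have hτinv : 1/τ T ≤ 1/τlo := one_div_le_one_div_of_le hτlo0 hτT1
  have hτinv0 : 0 ≤ 1/τ T := by positivity
  have hmsq : 0 ≤ ∑ i, (m T i)^2 := Finset.sum_nonneg fun i _ => sq_nonneg _
  have step1 : (1/τ T) * ∑ i, m T i * (θT i - θs i)
      ≤ (1/τ T) * ((D^2/(4*aT)) * ∑ i, Real.sqrt (vT i)) + (1/τ T) * (aT/ε * (C * S2)) := by
    have h1 := mul_le_mul_of_nonneg_left hsum1 hτinv0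
    rw [mul_add] at h1
    have h2 : (1/τ T) * (aT/ε * ∑ i, (m T i)^2) ≤ (1/τ T) * (aT/ε * (C * S2)) := by
      exact mul_le_mul_of_nonneg_left
        (mul_le_mul_of_nonneg_left hsum2 (by positivity : (0:ℝ) ≤ aT/ε)) hτinv0
    linarith
  have step2 : (1/τ T) * (aT/ε * (C * S2)) ≤ (1 - β)^2 * aT / (ε * τlo^2) * S2 := by
    have h3 : (1/τ T) * (aT/ε * (C * S2)) ≤ (1/τlo) * (aT/ε * (C * S2)) := by
      have hC0 : 0 ≤ C := by rw [hC]; positivity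
      exact mul_le_mul_of_nonneg_right hτinv
        (mul_nonneg (by positivity : (0:ℝ) ≤ aT/ε) (mul_nonneg hC0 hS2nn))
    have h4 : (1/τlo) * (aT/ε * (C * S2)) = (1 - β)^2 * aT / (ε * τlo^2) * S2 := by
      rw [hC]; field_simp
    linarith
  calc (1/τ T) * ∑ i, m T i * (θT i - θs i)
      ≤ (1/τ T) * ((D^2/(4*aT)) * ∑ i, Real.sqrt (vT i)) + (1/τ T) * (aT/ε * (C * S2)) := step1
    _ ≤ (1/τ T) * ((D^2/(4*aT)) * ∑ i, Real.sqrt (vT i)) + (1 - β)^2 * aT / (ε * τlo^2) * S2 := by linarith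
    _ = (1 / τ T) * (D ^ 2 / (4 * aT)) * ∑ i, Real.sqrt (vT i)
        + (1 - β) ^ 2 * aT / (ε * τlo ^ 2) * S2 := by ring
end

section
/- (Non-robust case regret bound.) Let d ≥ 1, T ≥ 2, let 0 < β < 1, ε > 0, α > 0, D ≥ 0, and set α_t = α/√t. Let f_1,…,f_T : ℝ^d → ℝ be convex functions, let θ_1 ∈ ℝ^d, and suppose for each t: f_t is differentiable at θ_t with gradient g_t = ∇f_t(θ_t); m_0 = 0 and m_t = β m_{t−1} + (1 − β) g_t; v_t ∈ ℝ^d with v_{t,i} ≥ ε² for all i; and θ_{t+1,i} = θ_{t,i} − α_t v_{t,i}^{−1/2} m_{t,i} for all i. Let θ* ∈ ℝ^d satisfy |θ_{t,i} − θ*_i| ≤ D for all 1 ≤ t ≤ T and all i. Then R_T = Σ_{t=1}^{T} ( f_t(θ_t) − f_t(θ*) ) satisfies R_T ≤ (D² √T/(4(1 − β) α)) Σ_i v_{T,i}^{1/2} + (1/2) Σ_{t=1}^{T−1} (D²/α_t) Σ_i v_{t,i}^{1/2} + (α/(ε √T)) Σ_{k=1}^{T} Σ_i β^{T−k} g_{k,i}²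 + ((1 + β) α sqrt(1 + log(T − 1))/(2(1 − β) ε)) Σ_{i=1}^{d} sqrt( Σ_{t=1}^{T−1} g_{t,i}⁴ ). -/
lemma sum_Icc_one' {R : Type*} [AddCommMonoid R] (f : ℕ → R) (n : ℕ) :
    ∑ t ∈ Finset.Icc 1 n, f t = ∑ j ∈ Finset.range n, f (j+1) := by
  rw [← Finset.Ico_add_one_right_eq_Icc, Finset.sum_Ico_eq_sum_range]
  have hn : n + 1 - 1 = n := by omega
  rw [hn]
  exact Finset.sum_congr rfl (fun j _ => by rw [add_comm])

lemma geo_le (β : ℝ) (hβ0 : 0 ≤ β) (hβ1 : β < 1) (k n : ℕ) :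
    ∑ t ∈ Finset.Icc k n, β^(t-k) ≤ 1/(1-β) := by
  rw [← Finset.Ico_add_one_right_eq_Icc, Finset.sum_Ico_eq_sum_range]
  have h1 : ∀ j ∈ Finset.range (n+1-k), β^((k+j)-k) = β^j := fun j _ => by congr 1; omega
  rw [Finset.sum_congr rfl h1]
  have h2 := geom_sum_mul β (n+1-k)
  have h3 : (0:ℝ) ≤ β^(n+1-k) := pow_nonneg hβ0 _
  rw [le_div_iff₀ (by linarith : (0:ℝ) < 1 - β)]
  nlinarith [h2, h3]

lemma geo_rev (β : ℝ) (hβ0 : 0 ≤ β) (hβ1 : β < 1) (t : ℕ) :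
    ∑ k ∈ Finset.Icc 1 t, β^(t-k) ≤ 1/(1-β) := by
  rw [sum_Icc_one']
  have h1 : ∀ j ∈ Finset.range t, β^(t-(j+1)) = β^(t-1-j) := by
    intro j _; congr 1; omega
  rw [Finset.sum_congr rfl h1, Finset.sum_range_reflect (fun j => β^j) t]
  have h2 := geom_sum_mul β t
  have h3 : (0:ℝ) ≤ β^t := pow_nonneg hβ0 _
  rw [le_div_iff₀ (by linarith : (0:ℝ) < 1 - β)]
  nlinarith [h2, h3]

lemma M_form (T : ℕ) (β : ℝ) (G M : ℕ → ℝ) (hM0 : M 0 = 0)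
    (hM : ∀ t, 1 ≤ t → t ≤ T → M t = β * M (t-1) + (1-β) * G t) :
    ∀ t, t ≤ T → M t = (1-β) * ∑ k ∈ Finset.Icc 1 t, β^(t-k) * G k := by
  intro t
  induction t with
  | zero => intro _; simp [hM0]
  | succ n ih =>
    intro h
    have h1 : M (n+1) = β * M n + (1-β) * G (n+1) := by
      have := hM (n+1) (by omega) h
      simpa using this
    rw [h1, ih (by omega), Finset.sum_Icc_succ_top (by omega : 1 ≤ n + 1)]
    rw [Nat.sub_self, pow_zero, one_mul]
    have h2 : ∀ k ∈ Finset.Icc 1 n, β^(n+1-k) * G k = β * (β^(n-k) * G k) := by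
      intro k hk
      rw [Finset.mem_Icc] at hk
      have : n + 1 - k = (n - k) + 1 := by omega
      rw [this, pow_succ]; ring
    rw [Finset.sum_congr rfl h2, ← Finset.mul_sum]
    ring

lemma M_sq_le (β : ℝ) (hβ0 : 0 ≤ β) (hβ1 : β < 1) (G : ℕ → ℝ) (t : ℕ) :
    ((1-β) * ∑ k ∈ Finset.Icc 1 t, β^(t-k) * G k)^2
      ≤ (1-β) * ∑ k ∈ Finset.Icc 1 t, β^(t-k) * (G k)^2 := by
  have hβ' : (0:ℝ) < 1 - β := by linarith
  set s := Finset.Icc 1 t with hs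
  have hcs := Finset.sum_mul_sq_le_sq_mul_sq s (fun k => Real.sqrt (β^(t-k)))
    (fun k => Real.sqrt (β^(t-k)) * G k)
  have he1 : ∀ k ∈ s, Real.sqrt (β^(t-k)) * (Real.sqrt (β^(t-k)) * G k) = β^(t-k) * G k := by
    intro k _
    rw [← mul_assoc, Real.mul_self_sqrt (pow_nonneg hβ0 _)]
  have he2 : ∀ k ∈ s, (Real.sqrt (β^(t-k)))^2 = β^(t-k) := by
    intro k _; exact Real.sq_sqrt (pow_nonneg hβ0 _)
  have he3 : ∀ k ∈ s, (Real.sqrt (β^(t-k)) * G k)^2 = β^(t-k) * (G k)^2 := by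
    intro k _; rw [mul_pow, Real.sq_sqrt (pow_nonneg hβ0 _)]
  rw [Finset.sum_congr rfl he1, Finset.sum_congr rfl he2, Finset.sum_congr rfl he3] at hcs
  have hgeo : ∑ k ∈ s, β^(t-k) ≤ 1/(1-β) := geo_rev β hβ0 hβ1 t
  have hpos : (0:ℝ) ≤ ∑ k ∈ s, β^(t-k) * (G k)^2 :=
    Finset.sum_nonneg (fun k _ => mul_nonneg (pow_nonneg hβ0 _) (sq_nonneg _))
  have h4 : (∑ k ∈ s, β^(t-k) * G k)^2 ≤ (1/(1-β)) * ∑ k ∈ s, β^(t-k) * (G k)^2 :=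
    hcs.trans (mul_le_mul_of_nonneg_right hgeo hpos)
  calc ((1-β) * ∑ k ∈ s, β^(t-k) * G k)^2 = (1-β)^2 * (∑ k ∈ s, β^(t-k) * G k)^2 := by ring
  _ ≤ (1-β)^2 * ((1/(1-β)) * ∑ k ∈ s, β^(t-k) * (G k)^2) :=
      mul_le_mul_of_nonneg_left h4 (sq_nonneg _)
  _ = (1-β) * ∑ k ∈ s, β^(t-k) * (G k)^2 := by field_simp

lemma key_identity (n : ℕ) (β : ℝ) (hβ1 : β < 1)
    (G M X c : ℕ → ℝ) (hM0 : M 0 = 0)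
    (hM : ∀ t, 1 ≤ t → t ≤ n+1 → M t = β * M (t-1) + (1-β) * G t)
    (hc : ∀ t, 1 ≤ t → t ≤ n → 0 < c t)
    (hX : ∀ t, 1 ≤ t → t ≤ n → X (t+1) = X t - c t * M t) :
    ∑ t ∈ Finset.Icc 1 (n+1), G t * X t
      = (1/(1-β)) * (M (n+1) * X (n+1))
        + ∑ t ∈ Finset.Icc 1 n, (1/(2 * c t)) * ((X t)^2 - (X (t+1))^2)
        + ((1+β)/(2*(1-β))) * ∑ t ∈ Finset.Icc 1 n, c t * (M t)^2 := by
  have hb : (0:ℝ) < 1 - β := by linarith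
  have hstep : ∀ t ∈ Finset.Icc 1 n,
      M t * X t = (1/(2 * c t)) * ((X t)^2 - (X (t+1))^2) + (1/2) * (c t * (M t)^2) := by
    intro t ht
    rw [Finset.mem_Icc] at ht
    have hct := hc t ht.1 ht.2
    rw [hX t ht.1 ht.2]
    field_simp
    ring
  have e0 : ∀ t ∈ Finset.Icc 1 (n+1), (1-β) * (G t * X t)
      = M t * X t - β * (M (t-1) * X t) := by
    intro t ht
    rw [Finset.mem_Icc] at ht
    rw [hM t ht.1 ht.2]
    ring
  have hL : (1-β) * ∑ t ∈ Finset.Icc 1 (n+1), G t * X t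
      = ∑ t ∈ Finset.Icc 1 (n+1), M t * X t
        - β * ∑ t ∈ Finset.Icc 1 (n+1), M (t-1) * X t := by
    rw [Finset.mul_sum, Finset.sum_congr rfl e0, Finset.sum_sub_distrib, Finset.mul_sum]
  have hA : ∑ t ∈ Finset.Icc 1 (n+1), M t * X t
      = ∑ t ∈ Finset.Icc 1 n, M t * X t + M (n+1) * X (n+1) :=
    Finset.sum_Icc_succ_top (by omega) _
  have hB : ∑ t ∈ Finset.Icc 1 (n+1), M (t-1) * X t
      = ∑ t ∈ Finset.Icc 1 n, M t * X (t+1) := by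
    rw [sum_Icc_one' (fun t => M (t-1) * X t) (n+1), sum_Icc_one' (fun t => M t * X (t+1)) n,
      Finset.sum_range_succ' _ n]
    simp only [Nat.add_sub_cancel, hM0, Pi.zero_apply]
    norm_num
  have hC : ∑ t ∈ Finset.Icc 1 n, M t * X (t+1)
      = ∑ t ∈ Finset.Icc 1 n, M t * X t - ∑ t ∈ Finset.Icc 1 n, c t * (M t)^2 := by
    rw [← Finset.sum_sub_distrib]
    apply Finset.sum_congr rfl
    intro t ht
    rw [Finset.mem_Icc] at ht
    rw [hX t ht.1 ht.2]
    ring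
  have hQ : ∑ t ∈ Finset.Icc 1 n, M t * X t
      = ∑ t ∈ Finset.Icc 1 n, (1/(2 * c t)) * ((X t)^2 - (X (t+1))^2)
        + (1/2) * ∑ t ∈ Finset.Icc 1 n, c t * (M t)^2 := by
    rw [Finset.mul_sum, ← Finset.sum_add_distrib]
    exact Finset.sum_congr rfl hstep
  have hfin : (1-β) * ∑ t ∈ Finset.Icc 1 (n+1), G t * X t
      = M (n+1) * X (n+1)
        + (1-β) * ∑ t ∈ Finset.Icc 1 n, (1/(2 * c t)) * ((X t)^2 - (X (t+1))^2)
        + ((1+β)/2) * ∑ t ∈ Finset.Icc 1 n, c t * (M t)^2 := by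
    rw [hL, hA, hB, hC, hQ]
    ring
  have hdiv : ∑ t ∈ Finset.Icc 1 (n+1), G t * X t
      = (1/(1-β)) * ((1-β) * ∑ t ∈ Finset.Icc 1 (n+1), G t * X t) := by
    field_simp
  rw [hdiv, hfin]
  field_simp

lemma bd2 (T : ℕ) (hT : 1 ≤ T) (β ε α D : ℝ) (hβ0 : 0 < β) (hβ1 : β < 1)
    (hε : 0 < ε) (hα : 0 < α) (hD : 0 ≤ D) (G : ℕ → ℝ) (MT XT vT : ℝ)
    (hMT : MT = (1-β) * ∑ k ∈ Finset.Icc 1 T, β^(T-k) * G k)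
    (hXT : |XT| ≤ D) (hvT : ε ≤ Real.sqrt vT) :
    (1/(1-β)) * (MT * XT) ≤ D^2 * Real.sqrt T/(4*(1-β)*α) * Real.sqrt vT
      + α/(ε * Real.sqrt T) * ∑ k ∈ Finset.Icc 1 T, β^(T-k) * (G k)^2 := by
  have hb : (0:ℝ) < 1 - β := by linarith
  have hsT : 0 < Real.sqrt T := Real.sqrt_pos.2 (by exact_mod_cast hT)
  set c : ℝ := α/(ε * Real.sqrt T) with hcdef
  have hc : 0 < c := by positivity
  have h1 : MT * XT ≤ |MT| * D :=
    (le_abs_self _).trans (by rw [abs_mul]; exact mul_le_mul_of_nonneg_left hXT (abs_nonneg _))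
  have h2 : |MT| ≤ (1-β) * ∑ k ∈ Finset.Icc 1 T, β^(T-k) * |G k| := by
    rw [hMT, abs_mul, abs_of_pos hb]
    apply mul_le_mul_of_nonneg_left _ hb.le
    refine (Finset.abs_sum_le_sum_abs _ _).trans (le_of_eq ?_)
    apply Finset.sum_congr rfl
    intro k _
    rw [abs_mul, abs_of_nonneg (pow_nonneg hβ0.le _)]
  have h3 : ∀ k : ℕ, D * |G k| ≤ c * (G k)^2 + D^2/(4*c) := by
    intro k
    have key : c * (G k)^2 + D^2/(4*c) - D * |G k| = (2*c*|G k| - D)^2 / (4*c) := by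
      have hGa := sq_abs (G k)
      field_simp
      rw [← sq_abs (G k)]
      ring
    have hnn : (0:ℝ) ≤ (2*c*|G k| - D)^2 / (4*c) := by positivity
    linarith
  calc (1/(1-β)) * (MT * XT)
      ≤ (1/(1-β)) * (((1-β) * ∑ k ∈ Finset.Icc 1 T, β^(T-k) * |G k|) * D) := by
        apply mul_le_mul_of_nonneg_left _ (by positivity)
        exact h1.trans (mul_le_mul_of_nonneg_right h2 hD)
    _ = (∑ k ∈ Finset.Icc 1 T, β^(T-k) * |G k|) * D := by
        field_simp
    _ = ∑ k ∈ Finset.Icc 1 T, β^(T-k) * (D * |G k|) := by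
        rw [Finset.sum_mul]
        exact Finset.sum_congr rfl fun k _ => by ring
    _ ≤ ∑ k ∈ Finset.Icc 1 T, β^(T-k) * (c * (G k)^2 + D^2/(4*c)) := by
        apply Finset.sum_le_sum
        intro k _
        exact mul_le_mul_of_nonneg_left (h3 k) (pow_nonneg hβ0.le _)
    _ = c * ∑ k ∈ Finset.Icc 1 T, β^(T-k) * (G k)^2
          + (D^2/(4*c)) * ∑ k ∈ Finset.Icc 1 T, β^(T-k) := by
        rw [Finset.mul_sum, Finset.mul_sum, ← Finset.sum_add_distrib]
        apply Finset.sum_congr rfl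
        intro k _
        ring
    _ ≤ c * ∑ k ∈ Finset.Icc 1 T, β^(T-k) * (G k)^2 + (D^2/(4*c)) * (1/(1-β)) := by
        have := geo_rev β hβ0.le hβ1 T
        have hnn : (0:ℝ) ≤ D^2/(4*c) := by positivity
        nlinarith [mul_le_mul_of_nonneg_left this hnn]
    _ ≤ D^2 * Real.sqrt T/(4*(1-β)*α) * Real.sqrt vT
          + c * ∑ k ∈ Finset.Icc 1 T, β^(T-k) * (G k)^2 := by
        have he : (D^2/(4*c)) * (1/(1-β)) = D^2 * Real.sqrt T/(4*(1-β)*α) * ε := by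
          rw [hcdef]
          field_simp
        rw [he]
        have : D^2 * Real.sqrt T/(4*(1-β)*α) * ε ≤ D^2 * Real.sqrt T/(4*(1-β)*α) * Real.sqrt vT :=
          mul_le_mul_of_nonneg_left hvT (by positivity)
        linarith
    _ = D^2 * Real.sqrt T/(4*(1-β)*α) * Real.sqrt vT
          + α/(ε * Real.sqrt T) * ∑ k ∈ Finset.Icc 1 T, β^(T-k) * (G k)^2 := by rw [hcdef]

lemma bd3 (n : ℕ) (β ε α : ℝ) (hβ0 : 0 < β) (hβ1 : β < 1) (hε : 0 < ε) (hα : 0 < α)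
    (G M V : ℕ → ℝ)
    (hMsq : ∀ t, 1 ≤ t → t ≤ n → (M t)^2 ≤ (1-β) * ∑ k ∈ Finset.Icc 1 t, β^(t-k) * (G k)^2)
    (hVε : ∀ t, 1 ≤ t → t ≤ n → ε ≤ Real.sqrt (V t)) :
    ∑ t ∈ Finset.Icc 1 n, (α/Real.sqrt t) * (Real.sqrt (V t))⁻¹ * (M t)^2
      ≤ (α/ε) * ∑ k ∈ Finset.Icc 1 n, (G k)^2 / Real.sqrt k := by
  have hb : (0:ℝ) < 1 - β := by linarith
  have hsq : ∀ t : ℕ, 1 ≤ t → (0:ℝ) < Real.sqrt t := by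
    intro t ht
    exact Real.sqrt_pos.2 (by exact_mod_cast ht)
  have step1 : ∑ t ∈ Finset.Icc 1 n, (α/Real.sqrt t) * (Real.sqrt (V t))⁻¹ * (M t)^2
      ≤ ∑ t ∈ Finset.Icc 1 n, ((1-β)/ε) *
          ∑ k ∈ Finset.Icc 1 t, (α/Real.sqrt t) * (β^(t-k) * (G k)^2) := by
    apply Finset.sum_le_sum
    intro t ht
    rw [Finset.mem_Icc] at ht
    have h1 : (Real.sqrt (V t))⁻¹ ≤ ε⁻¹ := inv_anti₀ hε (hVε t ht.1 ht.2)
    have h2 := hMsq t ht.1 ht.2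
    have h3 : (0:ℝ) ≤ α / Real.sqrt t := by positivity
    calc (α/Real.sqrt t) * (Real.sqrt (V t))⁻¹ * (M t)^2
        ≤ (α/Real.sqrt t) * ε⁻¹ * ((1-β) * ∑ k ∈ Finset.Icc 1 t, β^(t-k) * (G k)^2) := by
          apply mul_le_mul
          · exact mul_le_mul_of_nonneg_left h1 h3
          · exact h2
          · exact sq_nonneg _
          · positivity
      _ = ((1-β)/ε) * ∑ k ∈ Finset.Icc 1 t, (α/Real.sqrt t) * (β^(t-k) * (G k)^2) := by
          simp only [Finset.mul_sum]
          apply Finset.sum_congr rfl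
          intro k _
          field_simp
  have step2 : ∑ t ∈ Finset.Icc 1 n, ((1-β)/ε) *
        ∑ k ∈ Finset.Icc 1 t, (α/Real.sqrt t) * (β^(t-k) * (G k)^2)
      = ((1-β)/ε) * ∑ k ∈ Finset.Icc 1 n,
          ∑ t ∈ Finset.Icc k n, (α/Real.sqrt t) * (β^(t-k) * (G k)^2) := by
    rw [← Finset.mul_sum]
    congr 1
    have hswap := Finset.sum_Ico_Ico_comm 1 (n+1)
      (fun k t => (α/Real.sqrt t) * (β^(t-k) * (G k)^2))
    simp only [← Finset.Ico_add_one_right_eq_Icc]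
    rw [← hswap]
  have step3 : ∑ k ∈ Finset.Icc 1 n,
        ∑ t ∈ Finset.Icc k n, (α/Real.sqrt t) * (β^(t-k) * (G k)^2)
      ≤ ∑ k ∈ Finset.Icc 1 n, (α/Real.sqrt k) * (1/(1-β)) * (G k)^2 := by
    apply Finset.sum_le_sum
    intro k hk
    rw [Finset.mem_Icc] at hk
    calc ∑ t ∈ Finset.Icc k n, (α/Real.sqrt t) * (β^(t-k) * (G k)^2)
        ≤ ∑ t ∈ Finset.Icc k n, (α/Real.sqrt k) * (β^(t-k) * (G k)^2) := by
          apply Finset.sum_le_sum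
          intro t ht
          rw [Finset.mem_Icc] at ht
          have hle : α/Real.sqrt t ≤ α/Real.sqrt k := by
            apply div_le_div_of_nonneg_left hα.le (hsq k hk.1)
            exact Real.sqrt_le_sqrt (by exact_mod_cast ht.1)
          exact mul_le_mul_of_nonneg_right hle (by positivity)
      _ = (α/Real.sqrt k) * (G k)^2 * ∑ t ∈ Finset.Icc k n, β^(t-k) := by
          rw [Finset.mul_sum]
          apply Finset.sum_congr rfl
          intro t _
          ring
      _ ≤ (α/Real.sqrt k) * (G k)^2 * (1/(1-β)) :=
          mul_le_mul_of_nonneg_left (geo_le β hβ0.le hβ1 k n) (by positivity)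
      _ = (α/Real.sqrt k) * (1/(1-β)) * (G k)^2 := by ring
  calc ∑ t ∈ Finset.Icc 1 n, (α/Real.sqrt t) * (Real.sqrt (V t))⁻¹ * (M t)^2
      ≤ ((1-β)/ε) * ∑ k ∈ Finset.Icc 1 n,
          ∑ t ∈ Finset.Icc k n, (α/Real.sqrt t) * (β^(t-k) * (G k)^2) := by
        rw [← step2]; exact step1
    _ ≤ ((1-β)/ε) * ∑ k ∈ Finset.Icc 1 n, (α/Real.sqrt k) * (1/(1-β)) * (G k)^2 :=
        mul_le_mul_of_nonneg_left step3 (by positivity)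
    _ = (α/ε) * ∑ k ∈ Finset.Icc 1 n, (G k)^2 / Real.sqrt k := by
        rw [Finset.mul_sum, Finset.mul_sum]
        apply Finset.sum_congr rfl
        intro k hk
        rw [Finset.mem_Icc] at hk
        have := hsq k hk.1
        field_simp

lemma bd4 (n : ℕ) (hn : 1 ≤ n) (G : ℕ → ℝ) :
    ∑ k ∈ Finset.Icc 1 n, (G k)^2 / Real.sqrt k
      ≤ Real.sqrt (1 + Real.log n) * Real.sqrt (∑ k ∈ Finset.Icc 1 n, (G k)^4) := by
  have hcs := Finset.sum_mul_sq_le_sq_mul_sq (Finset.Icc 1 n)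
    (fun k => (Real.sqrt k)⁻¹) (fun k => (G k)^2)
  have he1 : ∀ k ∈ Finset.Icc 1 n, (Real.sqrt k)⁻¹ * (G k)^2 = (G k)^2 / Real.sqrt k := by
    intro k _; rw [div_eq_mul_inv]; ring
  have he2 : ∀ k ∈ Finset.Icc 1 n, ((Real.sqrt k)⁻¹)^2 = ((k:ℝ))⁻¹ := by
    intro k _
    rw [inv_pow, Real.sq_sqrt (Nat.cast_nonneg k)]
  have he3 : ∀ k ∈ Finset.Icc 1 n, ((G k)^2)^2 = (G k)^4 := by
    intro k _; ring
  rw [Finset.sum_congr rfl he1, Finset.sum_congr rfl he2, Finset.sum_congr rfl he3] at hcs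
  have hharm : ∑ k ∈ Finset.Icc 1 n, ((k:ℝ))⁻¹ ≤ 1 + Real.log n := by
    have h1 : ((harmonic n : ℚ) : ℝ) = ∑ k ∈ Finset.Icc 1 n, ((k:ℝ))⁻¹ := by
      rw [harmonic_eq_sum_Icc]
      push_cast
      rfl
    have h2 := harmonic_le_one_add_log n
    linarith [h1 ▸ h2]
  have hG4 : (0:ℝ) ≤ ∑ k ∈ Finset.Icc 1 n, (G k)^4 :=
    Finset.sum_nonneg fun k _ => by positivity
  have hlhs : (0:ℝ) ≤ ∑ k ∈ Finset.Icc 1 n, (G k)^2 / Real.sqrt k :=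
    Finset.sum_nonneg fun k _ => by positivity
  have hlog : (0:ℝ) ≤ 1 + Real.log n := by
    have : (0:ℝ) ≤ Real.log n := Real.log_nonneg (by exact_mod_cast hn)
    linarith
  have key : (∑ k ∈ Finset.Icc 1 n, (G k)^2 / Real.sqrt k)^2
      ≤ (1 + Real.log n) * ∑ k ∈ Finset.Icc 1 n, (G k)^4 :=
    hcs.trans (mul_le_mul_of_nonneg_right hharm hG4)
  calc ∑ k ∈ Finset.Icc 1 n, (G k)^2 / Real.sqrt k
      = Real.sqrt ((∑ k ∈ Finset.Icc 1 n, (G k)^2 / Real.sqrt k)^2) :=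
        (Real.sqrt_sq hlhs).symm
    _ ≤ Real.sqrt ((1 + Real.log n) * ∑ k ∈ Finset.Icc 1 n, (G k)^4) :=
        Real.sqrt_le_sqrt key
    _ = Real.sqrt (1 + Real.log n) * Real.sqrt (∑ k ∈ Finset.Icc 1 n, (G k)^4) :=
        Real.sqrt_mul hlog _

lemma coord_bound (T : ℕ) (hT : 2 ≤ T) (β ε α D : ℝ)
    (hβ0 : 0 < β) (hβ1 : β < 1) (hε : 0 < ε) (hα : 0 < α) (hD : 0 ≤ D)
    (G M V X : ℕ → ℝ)
    (hM0 : M 0 = 0)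
    (hM : ∀ t, 1 ≤ t → t ≤ T → M t = β * M (t-1) + (1-β) * G t)
    (hV : ∀ t, 1 ≤ t → t ≤ T → ε^2 ≤ V t)
    (hX : ∀ t, 1 ≤ t → t ≤ T → X (t+1) = X t - (α / Real.sqrt t) * (Real.sqrt (V t))⁻¹ * M t)
    (hXD : ∀ t, 1 ≤ t → t ≤ T → |X t| ≤ D) :
    ∑ t ∈ Finset.Icc 1 T, G t * X t
      ≤ D^2 * Real.sqrt T / (4*(1-β)*α) * Real.sqrt (V T)
        + (1/2) * ∑ t ∈ Finset.Icc 1 (T-1), (D^2 / (α / Real.sqrt t)) * Real.sqrt (V t)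
        + α / (ε * Real.sqrt T) * ∑ k ∈ Finset.Icc 1 T, β^(T-k) * (G k)^2
        + (1+β)*α*Real.sqrt (1 + Real.log ((T:ℝ)-1)) / (2*(1-β)*ε)
            * Real.sqrt (∑ t ∈ Finset.Icc 1 (T-1), (G t)^4) := by
  obtain ⟨n, rfl⟩ : ∃ n, T = n + 1 := ⟨T - 1, by omega⟩
  have hn : 1 ≤ n := by omega
  have hb : (0:ℝ) < 1 - β := by linarith
  simp only [Nat.add_sub_cancel]
  have hcast : ((n+1:ℕ):ℝ) - 1 = (n:ℝ) := by push_cast; ring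
  rw [hcast]
  have hsq : ∀ t : ℕ, 1 ≤ t → (0:ℝ) < Real.sqrt t := fun t ht =>
    Real.sqrt_pos.2 (by exact_mod_cast ht)
  have hVpos : ∀ t, 1 ≤ t → t ≤ n+1 → 0 < Real.sqrt (V t) := by
    intro t h1 h2
    exact Real.sqrt_pos.2 (lt_of_lt_of_le (by positivity) (hV t h1 h2))
  have hεV : ∀ t, 1 ≤ t → t ≤ n+1 → ε ≤ Real.sqrt (V t) := by
    intro t h1 h2
    have := Real.sqrt_le_sqrt (hV t h1 h2)
    rwa [Real.sqrt_sq hε.le] at this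
  set c : ℕ → ℝ := fun t => (α / Real.sqrt t) * (Real.sqrt (V t))⁻¹ with hcdef
  have hcpos : ∀ t, 1 ≤ t → t ≤ n → 0 < c t := by
    intro t h1 h2
    have := hsq t h1
    have := hVpos t h1 (by omega)
    simp only [hcdef]
    positivity
  have hXc : ∀ t, 1 ≤ t → t ≤ n → X (t+1) = X t - c t * M t := by
    intro t h1 h2
    rw [hX t h1 (by omega)]
  rw [key_identity n β hβ1 G M X c hM0 hM hcpos hXc]
  have hMform := M_form (n+1) β G M hM0 hM
  have B1 : (1/(1-β)) * (M (n+1) * X (n+1))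
      ≤ D^2 * Real.sqrt ((n+1:ℕ):ℝ) / (4*(1-β)*α) * Real.sqrt (V (n+1))
        + α / (ε * Real.sqrt ((n+1:ℕ):ℝ)) * ∑ k ∈ Finset.Icc 1 (n+1), β^(n+1-k) * (G k)^2 :=
    bd2 (n+1) (by omega) β ε α D hβ0 hβ1 hε hα hD G _ _ _ (hMform (n+1) le_rfl)
      (hXD (n+1) (by omega) le_rfl) (hεV (n+1) (by omega) le_rfl)
  have B2 : ∑ t ∈ Finset.Icc 1 n, (1/(2 * c t)) * ((X t)^2 - (X (t+1))^2)
      ≤ (1/2) * ∑ t ∈ Finset.Icc 1 n, (D^2 / (α / Real.sqrt t)) * Real.sqrt (V t) := by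
    rw [Finset.mul_sum]
    apply Finset.sum_le_sum
    intro t ht
    rw [Finset.mem_Icc] at ht
    have h2 : (X t)^2 ≤ D^2 := by
      have habs := hXD t ht.1 (by omega)
      calc (X t)^2 = |X t|^2 := (sq_abs _).symm
      _ ≤ D^2 := pow_le_pow_left₀ (abs_nonneg _) habs 2
    have h1 : (X t)^2 - (X (t+1))^2 ≤ D^2 := by nlinarith [sq_nonneg (X (t+1))]
    have hct := hcpos t ht.1 ht.2
    calc (1/(2 * c t)) * ((X t)^2 - (X (t+1))^2) ≤ (1/(2 * c t)) * D^2 :=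
        mul_le_mul_of_nonneg_left h1 (by positivity)
    _ = (1/2) * ((D^2 / (α / Real.sqrt t)) * Real.sqrt (V t)) := by
        simp only [hcdef]
        have h3 := hsq t ht.1
        have h4 := hVpos t ht.1 (by omega)
        field_simp
  have B3 : ((1+β)/(2*(1-β))) * ∑ t ∈ Finset.Icc 1 n, c t * (M t)^2
      ≤ (1+β)*α*Real.sqrt (1 + Real.log (n:ℝ)) / (2*(1-β)*ε)
          * Real.sqrt (∑ t ∈ Finset.Icc 1 n, (G t)^4) := by
    have hMsq' : ∀ t, 1 ≤ t → t ≤ n →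
        (M t)^2 ≤ (1-β) * ∑ k ∈ Finset.Icc 1 t, β^(t-k) * (G k)^2 := by
      intro t h1 h2
      rw [hMform t (by omega)]
      exact M_sq_le β hβ0.le hβ1 G t
    have hVε' : ∀ t, 1 ≤ t → t ≤ n → ε ≤ Real.sqrt (V t) := fun t h1 h2 =>
      hεV t h1 (by omega)
    have hb3 := bd3 n β ε α hβ0 hβ1 hε hα G M V hMsq' hVε'
    have hb4 := bd4 n hn G
    have hW : ∑ t ∈ Finset.Icc 1 n, c t * (M t)^2
        = ∑ t ∈ Finset.Icc 1 n, (α/Real.sqrt t) * (Real.sqrt (V t))⁻¹ * (M t)^2 := rfl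
    have hcoef : (0:ℝ) ≤ (1+β)/(2*(1-β)) := by positivity
    calc ((1+β)/(2*(1-β))) * ∑ t ∈ Finset.Icc 1 n, c t * (M t)^2
        ≤ ((1+β)/(2*(1-β))) * ((α/ε) * ∑ k ∈ Finset.Icc 1 n, (G k)^2 / Real.sqrt k) := by
          apply mul_le_mul_of_nonneg_left _ hcoef
          rw [hW]
          exact hb3
      _ ≤ ((1+β)/(2*(1-β))) * ((α/ε) *
            (Real.sqrt (1 + Real.log (n:ℝ)) * Real.sqrt (∑ t ∈ Finset.Icc 1 n, (G t)^4))) := by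
          apply mul_le_mul_of_nonneg_left _ hcoef
          exact mul_le_mul_of_nonneg_left hb4 (by positivity)
      _ = (1+β)*α*Real.sqrt (1 + Real.log (n:ℝ)) / (2*(1-β)*ε)
            * Real.sqrt (∑ t ∈ Finset.Icc 1 n, (G t)^4) := by
          field_simp
  linarith [B1, B2, B3]

lemma convex_grad_ineq {n : ℕ} {f : EuclideanSpace ℝ (Fin n) → ℝ}
    {gr x y : EuclideanSpace ℝ (Fin n)}
    (hc : ConvexOn ℝ Set.univ f) (hg : HasGradientAt f gr x) :
    f x - f y ≤ ∑ i, gr i * (x i - y i) := by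
  have hφconv : ConvexOn ℝ Set.univ (f ∘ (AffineMap.lineMap x y : ℝ →ᵃ[ℝ] _)) := by
    simpa using hc.comp_affineMap (AffineMap.lineMap x y)
  have hl : HasDerivAt (fun s : ℝ => (AffineMap.lineMap x y : ℝ →ᵃ[ℝ] _) s) (y - x) 0 := by
    have h : (fun s : ℝ => (AffineMap.lineMap x y : ℝ →ᵃ[ℝ] _) s)
        = fun s : ℝ => s • (y - x) + x := by
      funext s; rw [AffineMap.lineMap_apply_module]; module
    rw [h]
    simpa using ((hasDerivAt_id (0:ℝ)).smul_const (y - x)).add_const x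
  have hx0 : x = (AffineMap.lineMap x y : ℝ →ᵃ[ℝ] _) (0:ℝ) := by simp
  have hd : HasDerivAt (f ∘ (AffineMap.lineMap x y : ℝ →ᵃ[ℝ] _))
      (inner ℝ gr (y - x) : ℝ) 0 := by
    have hF := hg.hasFDerivAt
    rw [hx0] at hF
    have := hF.comp_hasDerivAt 0 hl
    simpa using this
  have hslope := hφconv.le_slope_of_hasDerivAt (Set.mem_univ (0:ℝ)) (Set.mem_univ (1:ℝ))
    one_pos hd
  rw [slope_def_field] at hslope
  simp only [Function.comp_apply, AffineMap.lineMap_apply_one, AffineMap.lineMap_apply_zero,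
    sub_zero, div_one] at hslope
  have h2 : (inner ℝ gr (y - x) : ℝ) = ∑ i, gr i * (y i - x i) := by
    simp [PiLp.inner_apply, RCLike.inner_apply, mul_comm]
  have h3 : ∑ i, gr i * (x i - y i) = -(∑ i, gr i * (y i - x i)) := by
    rw [← Finset.sum_neg_distrib]; apply Finset.sum_congr rfl; intros; ring
  rw [h3, ← h2]
  linarith




/-- Non-robust (Gaussian-limit) case regret bound (Corollary 1 of the AdaTerm paper):
constant interpolation factor `τ_t = 1 - β`, i.e. standard EMA momentum. -/
theorem adaterm_nonrobust_regret_bound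
    (d T : ℕ) (hd : 1 ≤ d) (hT : 2 ≤ T)
    (β ε α D : ℝ) (hβ0 : 0 < β) (hβ1 : β < 1)
    (hε : 0 < ε) (hα : 0 < α) (hD : 0 ≤ D)
    (f : ℕ → EuclideanSpace ℝ (Fin d) → ℝ)
    (hconv : ∀ t, 1 ≤ t → t ≤ T → ConvexOn ℝ Set.univ (f t))
    (θ : ℕ → EuclideanSpace ℝ (Fin d)) (g : ℕ → EuclideanSpace ℝ (Fin d))
    (hgrad : ∀ t, 1 ≤ t → t ≤ T → HasGradientAt (f t) (g t) (θ t))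
    (m : ℕ → Fin d → ℝ) (hm0 : m 0 = 0)
    (hm : ∀ t, 1 ≤ t → t ≤ T → ∀ i, m t i = β * m (t - 1) i + (1 - β) * g t i)
    (v : ℕ → Fin d → ℝ) (hv : ∀ t, 1 ≤ t → t ≤ T → ∀ i, ε ^ 2 ≤ v t i)
    (hupd : ∀ t, 1 ≤ t → t ≤ T → ∀ i,
      θ (t + 1) i = θ t i - (α / Real.sqrt t) * (Real.sqrt (v t i))⁻¹ * m t i)
    (θs : EuclideanSpace ℝ (Fin d))
    (hdiam : ∀ t, 1 ≤ t → t ≤ T → ∀ i, |θ t i - θs i| ≤ D) :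
    ∑ t ∈ Finset.Icc 1 T, (f t (θ t) - f t θs)
      ≤ D ^ 2 * Real.sqrt T / (4 * (1 - β) * α) * ∑ i, Real.sqrt (v T i)
        + (1 / 2) * ∑ t ∈ Finset.Icc 1 (T - 1),
            (D ^ 2 / (α / Real.sqrt t)) * ∑ i, Real.sqrt (v t i)
        + α / (ε * Real.sqrt T)
          * ∑ k ∈ Finset.Icc 1 T, ∑ i, β ^ (T - k) * (g k i) ^ 2
        + (1 + β) * α * Real.sqrt (1 + Real.log ((T : ℝ) - 1)) / (2 * (1 - β) * ε)
          * ∑ i, Real.sqrt (∑ t ∈ Finset.Icc 1 (T - 1), (g t i) ^ 4) := by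
  have step1 : ∑ t ∈ Finset.Icc 1 T, (f t (θ t) - f t θs)
      ≤ ∑ t ∈ Finset.Icc 1 T, ∑ i, g t i * (θ t i - θs i) := by
    apply Finset.sum_le_sum
    intro t ht
    rw [Finset.mem_Icc] at ht
    exact convex_grad_ineq (hconv t ht.1 ht.2) (hgrad t ht.1 ht.2)
  have step2 : ∑ t ∈ Finset.Icc 1 T, ∑ i, g t i * (θ t i - θs i)
      = ∑ i, ∑ t ∈ Finset.Icc 1 T, g t i * (θ t i - θs i) := Finset.sum_comm
  have step3 : ∀ i : Fin d, ∑ t ∈ Finset.Icc 1 T, g t i * (θ t i - θs i)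
      ≤ D^2 * Real.sqrt T / (4*(1-β)*α) * Real.sqrt (v T i)
        + (1/2) * ∑ t ∈ Finset.Icc 1 (T-1), (D^2 / (α / Real.sqrt t)) * Real.sqrt (v t i)
        + α / (ε * Real.sqrt T) * ∑ k ∈ Finset.Icc 1 T, β^(T-k) * (g k i)^2
        + (1+β)*α*Real.sqrt (1 + Real.log ((T:ℝ)-1)) / (2*(1-β)*ε)
            * Real.sqrt (∑ t ∈ Finset.Icc 1 (T-1), (g t i)^4) := by
    intro i
    apply coord_bound T hT β ε α D hβ0 hβ1 hε hα hD
      (fun t => g t i) (fun t => m t i) (fun t => v t i) (fun t => θ t i - θs i)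
    · rw [hm0]; rfl
    · intro t h1 h2; exact hm t h1 h2 i
    · intro t h1 h2; exact hv t h1 h2 i
    · intro t h1 h2; rw [hupd t h1 h2 i]; ring
    · intro t h1 h2; exact hdiam t h1 h2 i
  calc ∑ t ∈ Finset.Icc 1 T, (f t (θ t) - f t θs)
      ≤ ∑ i, ∑ t ∈ Finset.Icc 1 T, g t i * (θ t i - θs i) := by rw [← step2]; exact step1
    _ ≤ ∑ i : Fin d, (D^2 * Real.sqrt T / (4*(1-β)*α) * Real.sqrt (v T i)
        + (1/2) * ∑ t ∈ Finset.Icc 1 (T-1), (D^2 / (α / Real.sqrt t)) * Real.sqrt (v t i)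
        + α / (ε * Real.sqrt T) * ∑ k ∈ Finset.Icc 1 T, β^(T-k) * (g k i)^2
        + (1+β)*α*Real.sqrt (1 + Real.log ((T:ℝ)-1)) / (2*(1-β)*ε)
            * Real.sqrt (∑ t ∈ Finset.Icc 1 (T-1), (g t i)^4)) :=
        Finset.sum_le_sum (fun i _ => step3 i)
    _ = D ^ 2 * Real.sqrt T / (4 * (1 - β) * α) * ∑ i, Real.sqrt (v T i)
        + (1 / 2) * ∑ t ∈ Finset.Icc 1 (T - 1),
            (D ^ 2 / (α / Real.sqrt t)) * ∑ i, Real.sqrt (v t i)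
        + α / (ε * Real.sqrt T)
          * ∑ k ∈ Finset.Icc 1 T, ∑ i, β ^ (T - k) * (g k i) ^ 2
        + (1 + β) * α * Real.sqrt (1 + Real.log ((T : ℝ) - 1)) / (2 * (1 - β) * ε)
          * ∑ i, Real.sqrt (∑ t ∈ Finset.Icc 1 (T - 1), (g t i) ^ 4) := by
        rw [Finset.sum_add_distrib, Finset.sum_add_distrib, Finset.sum_add_distrib]
        congr 1
        · congr 1
          · congr 1
            · rw [← Finset.mul_sum]
            · -- term 2
              rw [← Finset.mul_sum]
              congr 1
              rw [Finset.sum_comm]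
              apply Finset.sum_congr rfl
              intro t _
              rw [← Finset.mul_sum]
          · -- term 3
            rw [← Finset.mul_sum]
            congr 1
            exact Finset.sum_comm
        · rw [← Finset.mul_sum]
end

section
/- Let ψ : (0,∞) → ℝ be the digamma function, i.e. ψ(x) is the derivative at x of the function y ↦ log Γ(y), where Γ is the real Gamma function. Then for every x > 0: log x − 1/x ≤ ψ(x) ≤ log x − 1/(2x). -/
open Real Set Filter

/-- `log y ≤ (y - 1/y)/2` for `y ≥ 1`. -/
lemma aux_log_le (y : ℝ) (hy : 1 ≤ y) : Real.log y ≤ (y - 1 / y) / 2 := by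
  set g : ℝ → ℝ := fun t => (t - 1 / t) / 2 - Real.log t with hg
  have hmono : MonotoneOn g (Set.Ici 1) := by
    have hder : ∀ t ∈ interior (Set.Ici (1:ℝ)), 0 ≤ deriv g t := by
      intro t ht
      rw [interior_Ici] at ht
      have ht0 : (0:ℝ) < t := lt_trans one_pos ht
      have h1 : HasDerivAt g ((1 - (-(1 / t ^ 2))) / 2 - t⁻¹) t := by
        have hinv : HasDerivAt (fun s : ℝ => 1 / s) (-(1 / t ^ 2)) t := by
          simpa [one_div] using hasDerivAt_inv ht0.ne'
        exact (((hasDerivAt_id t).sub hinv).div_const 2).sub (Real.hasDerivAt_log ht0.ne')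
      rw [h1.deriv]
      have : (1 - (-(1 / t ^ 2))) / 2 - t⁻¹ = (t - 1) ^ 2 / (2 * t ^ 2) := by
        field_simp; ring
      rw [this]
      positivity
    apply monotoneOn_of_deriv_nonneg (convex_Ici 1) _ _ hder
    · apply ContinuousOn.sub (ContinuousOn.div_const _ _)
      · exact Real.continuousOn_log.mono (fun t ht => ne_of_gt (lt_of_lt_of_le one_pos ht))
      · exact continuousOn_id.sub (continuousOn_const.div continuousOn_id
          (fun t ht => ne_of_gt (lt_of_lt_of_le one_pos ht)))
    · intro t ht
      rw [interior_Ici] at ht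
      have ht0 : (0:ℝ) < t := lt_trans one_pos ht
      have hinv : HasDerivAt (fun s : ℝ => 1 / s) (-(1 / t ^ 2)) t := by
        simpa [one_div] using hasDerivAt_inv ht0.ne'
      exact ((((hasDerivAt_id t).sub hinv).div_const 2).sub
        (Real.hasDerivAt_log ht0.ne')).differentiableAt.differentiableWithinAt
  have := hmono (Set.self_mem_Ici) (Set.mem_Ici.mpr hy) hy
  simp only [hg] at this
  simp only [Real.log_one] at this
  linarith [this]

/-- trapezoid bound: `log (t+1) - log t ≤ 1/(2t) + 1/(2(t+1))` for `t > 0`. -/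
lemma aux_trapezoid (t : ℝ) (ht : 0 < t) :
    Real.log (t + 1) - Real.log t ≤ 1 / (2 * t) + 1 / (2 * (t + 1)) := by
  have ht1 : (0:ℝ) < t + 1 := by linarith
  have h1 : Real.log (t + 1) - Real.log t = Real.log ((t + 1) / t) :=
    (Real.log_div ht1.ne' ht.ne').symm
  have h2 : (1:ℝ) ≤ (t + 1) / t := by
    rw [le_div_iff₀ ht]; linarith
  have h3 := aux_log_le _ h2
  rw [h1]
  refine h3.trans (le_of_eq ?_)
  field_simp
  ring

/-- Differentiability of `log ∘ Γ` at positive reals. -/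
lemma aux_diff (y : ℝ) (hy : 0 < y) :
    DifferentiableAt ℝ (fun y : ℝ => Real.log (Real.Gamma y)) y := by
  have h1 : DifferentiableAt ℝ Real.Gamma y :=
    Real.differentiableAt_Gamma (fun m => by
      have : (0:ℝ) ≤ m := Nat.cast_nonneg m
      intro h; rw [h] at hy; linarith)
  exact h1.log (Real.Gamma_pos_of_pos hy).ne'

/-- recurrence: `ψ(y+1) = ψ(y) + 1/y`. -/
lemma aux_rec (y : ℝ) (hy : 0 < y) :
    deriv (fun z : ℝ => Real.log (Real.Gamma z)) (y + 1)
      = deriv (fun z : ℝ => Real.log (Real.Gamma z)) y + 1 / y := by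
  set f : ℝ → ℝ := fun z => Real.log (Real.Gamma z) with hf
  have h1 : HasDerivAt (fun z : ℝ => f (z + 1)) (deriv f (y + 1)) y :=
    HasDerivAt.comp_add_const y 1 (aux_diff (y + 1) (by linarith)).hasDerivAt
  have h2 : HasDerivAt (fun z : ℝ => Real.log z + f z) (y⁻¹ + deriv f y) y :=
    (Real.hasDerivAt_log hy.ne').add (aux_diff y hy).hasDerivAt
  have heq : (fun z : ℝ => f (z + 1)) =ᶠ[nhds y] (fun z : ℝ => Real.log z + f z) := by
    filter_upwards [eventually_gt_nhds hy] with z hz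
    simp only [hf]
    rw [Real.Gamma_add_one hz.ne', Real.log_mul hz.ne' (Real.Gamma_pos_of_pos hz).ne']
  have h3 : HasDerivAt (fun z : ℝ => f (z + 1)) (y⁻¹ + deriv f y) y :=
    h2.congr_of_eventuallyEq heq
  have := h1.unique h3
  rw [this, one_div]; ring

/-- `ψ(x+n) = ψ(x) + ∑_{k<n} 1/(x+k)`. -/
lemma aux_add_nat (x : ℝ) (hx : 0 < x) (n : ℕ) :
    deriv (fun z : ℝ => Real.log (Real.Gamma z)) (x + n)
      = deriv (fun z : ℝ => Real.log (Real.Gamma z)) x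
        + ∑ k ∈ Finset.range n, 1 / (x + k) := by
  induction n with
  | zero => simp
  | succ n ih =>
    have hxn : (0:ℝ) < x + n := by positivity
    have : (x : ℝ) + (n + 1 : ℕ) = (x + n) + 1 := by push_cast; ring
    rw [this, aux_rec _ hxn, ih, Finset.sum_range_succ]
    ring

/-- slope bound: `ψ(y+1) ≥ log y` and `ψ(y) ≤ log y` for `y > 0`. -/
lemma aux_slope (y : ℝ) (hy : 0 < y) :
    Real.log y ≤ deriv (fun z : ℝ => Real.log (Real.Gamma z)) (y + 1) ∧
      deriv (fun z : ℝ => Real.log (Real.Gamma z)) y ≤ Real.log y := by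
  have hy1 : (0:ℝ) < y + 1 := by linarith
  have hconv := Real.convexOn_log_Gamma
  have hmem : y ∈ Set.Ioi (0:ℝ) := hy
  have hmem1 : (y + 1) ∈ Set.Ioi (0:ℝ) := hy1
  have hlt : y < y + 1 := by linarith
  have hslope : slope (Real.log ∘ Real.Gamma) y (y + 1) = Real.log y := by
    rw [slope_def_field]
    simp only [Function.comp_apply]
    rw [Real.Gamma_add_one hy.ne', Real.log_mul hy.ne' (Real.Gamma_pos_of_pos hy).ne']
    field_simp
    ring
  have hdiff1 : DifferentiableAt ℝ (Real.log ∘ Real.Gamma) (y + 1) := aux_diff _ hy1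
  have hdiff0 : DifferentiableAt ℝ (Real.log ∘ Real.Gamma) y := aux_diff _ hy
  have hupper := hconv.deriv_le_slope hmem hmem1 hlt hdiff0
  have hlower := hconv.slope_le_deriv hmem hmem1 hlt hdiff1
  rw [hslope] at hupper hlower
  exact ⟨hlower, hupper⟩

/-- Two-sided bounds on the digamma function `ψ = (log Γ)'`:
`log x - 1/x ≤ ψ(x) ≤ log x - 1/(2x)` for all `x > 0`. -/
theorem digamma_bounds (x : ℝ) (hx : 0 < x) :
    Real.log x - 1 / x ≤ deriv (fun y : ℝ => Real.log (Real.Gamma y)) x ∧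
      deriv (fun y : ℝ => Real.log (Real.Gamma y)) x ≤ Real.log x - 1 / (2 * x) := by
  constructor
  · -- lower bound: ψ(x) = ψ(x+1) - 1/x ≥ log x - 1/x
    have h1 := (aux_slope x hx).1
    have h2 := aux_rec x hx
    rw [h2] at h1
    linarith
  · -- upper bound
    refine le_of_forall_pos_le_add (fun ε hε => ?_)
    obtain ⟨n, hn⟩ := exists_nat_ge (1 / (2 * ε))
    have hxn : (0:ℝ) < x + n := by positivity
    have h1 := aux_add_nat x hx n
    have h2 := (aux_slope (x + n) hxn).2
    have h3 : Real.log (x + n) - Real.log x + (1 / (2 * x) - 1 / (2 * (x + n)))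
        ≤ ∑ k ∈ Finset.range n, 1 / (x + k) := by
      have hterm : ∀ k ∈ Finset.range n,
          (Real.log (x + ((k+1 : ℕ) : ℝ)) - Real.log (x + (k : ℝ)))
            + (1 / (2 * (x + (k : ℝ))) - 1 / (2 * (x + ((k+1 : ℕ) : ℝ)))) ≤ 1 / (x + k) := by
        intro k _
        have hxk : (0:ℝ) < x + k := by positivity
        have h5 := aux_trapezoid (x + k) hxk
        have hb : 1 / (2 * (x + (k:ℝ))) + 1 / (2 * (x + (k:ℝ))) = 1 / (x + (k:ℝ)) := by
          rw [← add_div, show (2:ℝ) * (x + (k:ℝ)) = (x + (k:ℝ)) * 2 by ring,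
            div_mul_eq_div_div_swap]
          norm_num
        push_cast
        push_cast at h5
        have hc : x + ((k:ℝ) + 1) = x + (k:ℝ) + 1 := by ring
        rw [hc]
        linarith
      calc Real.log (x + n) - Real.log x + (1 / (2 * x) - 1 / (2 * (x + n)))
          = ∑ k ∈ Finset.range n, ((Real.log (x + ((k+1 : ℕ) : ℝ)) - Real.log (x + (k : ℝ)))
              + (1 / (2 * (x + (k : ℝ))) - 1 / (2 * (x + ((k+1 : ℕ) : ℝ))))) := by
            rw [Finset.sum_add_distrib,
              Finset.sum_range_sub (fun k : ℕ => Real.log (x + (k : ℝ))),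
              Finset.sum_range_sub' (fun k : ℕ => 1 / (2 * (x + (k : ℝ))))]
            norm_num
        _ ≤ ∑ k ∈ Finset.range n, 1 / (x + k) := Finset.sum_le_sum hterm
    have h4 : (1:ℝ) / (2 * (x + n)) ≤ ε := by
      rw [div_le_iff₀ (by positivity)]
      rw [div_le_iff₀ (by positivity)] at hn
      nlinarith [hx, hε.le]
    linarith
end

section
/- Let d be a positive integer, ν > 0 and D ≥ 0 real numbers, and set ν̃ = ν/d and w = (ν̃ + 1)/(ν̃ + D) = (ν + d)/(ν + dD). Let ψ(x) denote the derivative at x of y ↦ log Γ(y). Then (1/2) ψ((ν + d)/2) − (1/2) ψ(ν/2) − d/(2ν) − (1/2) log(1 + dD/ν) − ((ν + d)/2) ( 1/(ν + dD) − 1/ν ) ≤ (1/2) ( −w + log w + 1 + ((ν̃ + 2)/(ν̃ + 1)) · (1/ν) ). -/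
open Real Set Filter Topology

section AdaTermAux

private lemma lg_differentiableAt {x : ℝ} (hx : 0 < x) :
    DifferentiableAt ℝ (fun y : ℝ => Real.log (Real.Gamma y)) x := by
  refine (Real.differentiableAt_Gamma ?_).log (Real.Gamma_ne_zero ?_) <;>
    exact fun m => ((neg_nonpos.mpr (Nat.cast_nonneg m)).trans_lt hx).ne'

private lemma lg_convex :
    ConvexOn ℝ (Ioi 0) (fun y : ℝ => Real.log (Real.Gamma y)) := by
  simpa [Function.comp_def] using Real.convexOn_log_Gamma

private lemma lg_rec {x : ℝ} (hx : 0 < x) :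
    Real.log (Real.Gamma (x + 1)) = Real.log (Real.Gamma x) + Real.log x := by
  rw [Real.Gamma_add_one hx.ne', Real.log_mul hx.ne' (Real.Gamma_pos_of_pos hx).ne', add_comm]

private lemma lg_deriv_rec {x : ℝ} (hx : 0 < x) :
    deriv (fun y : ℝ => Real.log (Real.Gamma y)) (x + 1)
      = deriv (fun y : ℝ => Real.log (Real.Gamma y)) x + 1 / x := by
  rw [← deriv_comp_add_const, one_div, ← Real.deriv_log,
    ← deriv_add (lg_differentiableAt hx) (Real.differentiableAt_log hx.ne')]
  apply Filter.EventuallyEq.deriv_eq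
  filter_upwards [eventually_gt_nhds hx] with y hy
  exact lg_rec hy

private lemma psi_le_log {x : ℝ} (hx : 0 < x) :
    deriv (fun y : ℝ => Real.log (Real.Gamma y)) x ≤ Real.log x := by
  have h := lg_convex.deriv_le_slope (mem_Ioi.mpr hx)
    (mem_Ioi.mpr (by linarith : (0:ℝ) < x + 1)) (by linarith) (lg_differentiableAt hx)
  rw [slope_def_field, lg_rec hx] at h
  simpa using h

private lemma log_sub_inv_le_psi {x : ℝ} (hx : 0 < x) :
    Real.log x - 1 / x ≤ deriv (fun y : ℝ => Real.log (Real.Gamma y)) x := by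
  have h := lg_convex.slope_le_deriv (mem_Ioi.mpr hx)
    (mem_Ioi.mpr (by linarith : (0:ℝ) < x + 1)) (by linarith)
    (lg_differentiableAt (by linarith : (0:ℝ) < x + 1))
  rw [slope_def_field, lg_rec hx, lg_deriv_rec hx] at h
  have : Real.log x ≤ deriv (fun y : ℝ => Real.log (Real.Gamma y)) x + 1 / x := by
    simpa using h
  linarith

/-- `log (1+t) ≤ t (t+2) / (2 (t+1))` for `t ≥ 0`. -/
private lemma key_log {t : ℝ} (ht : 0 ≤ t) :
    Real.log (1 + t) ≤ t * (t + 2) / (2 * (t + 1)) := by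
  have hd : ∀ s : ℝ, -1 < s →
      HasDerivAt (fun u : ℝ => u * (u + 2) / (2 * (u + 1)) - Real.log (1 + u))
        (s ^ 2 / (2 * (s + 1) ^ 2)) s := by
    intro s hs
    have hs1 : (0:ℝ) < s + 1 := by linarith
    have hs2 : (1:ℝ) + s ≠ 0 := by linarith
    have h1 : HasDerivAt (fun u : ℝ => u * (u + 2)) (2 * s + 2) s := by
      have h := (hasDerivAt_id s).mul ((hasDerivAt_id s).add_const 2)
      simp only [id_eq, one_mul, mul_one] at h
      exact h.congr_deriv (by ring)
    have h2 : HasDerivAt (fun u : ℝ => 2 * (u + 1)) 2 s := by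
      simpa using ((hasDerivAt_id s).add_const 1).const_mul 2
    have h3 := h1.div h2 (by positivity)
    have h4 : HasDerivAt (fun u : ℝ => Real.log (1 + u)) (1 / (1 + s)) s := by
      have := (Real.hasDerivAt_log (by linarith : (1:ℝ) + s ≠ 0)).comp s
        ((hasDerivAt_id s).const_add 1)
      simpa [one_div, Function.comp_def] using this
    have h5 := h3.sub h4
    refine h5.congr_deriv ?_
    have hs3 : s + 1 ≠ 0 := by linarith
    field_simp
    ring
  have hmono : MonotoneOn (fun u : ℝ => u * (u + 2) / (2 * (u + 1)) - Real.log (1 + u))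
      (Ici (0:ℝ)) := by
    refine monotoneOn_of_deriv_nonneg (convex_Ici 0) ?_ ?_ ?_
    · intro s hs
      have hs' : (-1:ℝ) < s := by have h0 : (0:ℝ) ≤ s := hs; linarith
      exact ((hd s hs').continuousAt).continuousWithinAt
    · intro s hs
      rw [interior_Ici] at hs
      exact ((hd s (by linarith [mem_Ioi.mp hs])).differentiableAt).differentiableWithinAt
    · intro s hs
      rw [interior_Ici] at hs
      have h0 : (0:ℝ) < s := mem_Ioi.mp hs
      rw [(hd s (by linarith)).deriv]
      positivity
  have h0 := hmono (self_mem_Ici) (mem_Ici.mpr ht) ht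
  simp only [zero_mul, zero_div, add_zero, zero_add, Real.log_one, sub_zero, mul_zero] at h0
  have : (0:ℝ) ≤ t * (t + 2) / (2 * (t + 1)) - Real.log (1 + t) := by
    simpa using h0
  linarith

/-- The sharpened digamma upper bound `ψ(x) ≤ log x - 1/(2x)`. -/
private lemma psi_le_log_sub {x : ℝ} (hx : 0 < x) :
    deriv (fun y : ℝ => Real.log (Real.Gamma y)) x ≤ Real.log x - 1 / (2 * x) := by
  set g : ℝ → ℝ := fun y => Real.log y - 1 / (2 * y)
      - deriv (fun y : ℝ => Real.log (Real.Gamma y)) y with hg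
  have step : ∀ y : ℝ, 0 < y → g (y + 1) ≤ g y := by
    intro y hy
    have hk := key_log (t := 1 / y) (by positivity)
    have hk' : Real.log (1 + 1 / y) ≤ 1 / (2 * y) + 1 / (2 * (y + 1)) := by
      have he : (1/y) * ((1/y) + 2) / (2 * ((1/y) + 1)) = 1 / (2 * y) + 1 / (2 * (y + 1)) := by
        field_simp
        ring
      linarith [he ▸ hk]
    have hlog : Real.log (y + 1) - Real.log y = Real.log (1 + 1 / y) := by
      rw [← Real.log_div (by positivity) hy.ne']
      congr 1
      field_simp
    have hmain : Real.log (y + 1) ≤ Real.log y + 1 / (2 * y) + 1 / (2 * (y + 1)) := by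
      linarith
    have hy2 : 1 / y - 1 / (2 * y) = 1 / (2 * y) := by
      field_simp
      ring
    simp only [hg]
    rw [lg_deriv_rec hy]
    linarith
  have iter : ∀ n : ℕ, g (x + n) ≤ g x := by
    intro n
    induction n with
    | zero => simp
    | succ n ih =>
      have h1 : g (x + n + 1) ≤ g (x + n) := step (x + n) (by positivity)
      have he : x + ((n : ℝ) + 1) = x + n + 1 := by ring
      push_cast
      rw [he]
      linarith
  have tail : ∀ n : ℕ, -(1 / (2 * (x + n))) ≤ g x := by
    intro n
    have hxn : (0:ℝ) < x + n := by positivity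
    have hb := psi_le_log hxn
    have : -(1 / (2 * (x + n))) ≤ g (x + n) := by
      simp only [hg]
      linarith
    exact this.trans (iter n)
  have hlim : Tendsto (fun n : ℕ => -(1 / (2 * (x + n)))) atTop (𝓝 0) := by
    have h1 : Tendsto (fun n : ℕ => 2 * (x + (n:ℝ))) atTop atTop := by
      apply Filter.Tendsto.const_mul_atTop (by norm_num : (0:ℝ) < 2)
      exact tendsto_atTop_add_const_left _ _ tendsto_natCast_atTop_atTop
    have := (tendsto_inv_atTop_zero.comp h1).neg
    simpa [one_div] using this
  have h0 : (0:ℝ) ≤ g x := le_of_tendsto' hlim tail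
  simp only [hg] at h0
  linarith

end AdaTermAux

/-- Surrogate upper bound (eq. (14) of the AdaTerm paper) on the gradient of the
Student's t log-likelihood with respect to the degrees of freedom `ν`, removing the
digamma function `ψ = (log Γ)'`. Here `ν̃ = ν/d` and `w = (ν̃+1)/(ν̃+D)`. -/
theorem studentT_dof_gradient_upper_bound
    (d : ℕ) (hd : 1 ≤ d) (ν D : ℝ) (hν : 0 < ν) (hD : 0 ≤ D)
    (νt w : ℝ) (hνt : νt = ν / d) (hw : w = (νt + 1) / (νt + D)) :
    (1 / 2) * deriv (fun y : ℝ => Real.log (Real.Gamma y)) ((ν + d) / 2)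
        - (1 / 2) * deriv (fun y : ℝ => Real.log (Real.Gamma y)) (ν / 2)
        - d / (2 * ν) - (1 / 2) * Real.log (1 + d * D / ν)
        - ((ν + d) / 2) * (1 / (ν + d * D) - 1 / ν)
      ≤ (1 / 2) * (-w + Real.log w + 1 + ((νt + 2) / (νt + 1)) * (1 / ν)) := by
  have hd1 : (1:ℝ) ≤ (d:ℝ) := by exact_mod_cast hd
  have hd0 : (0:ℝ) < (d:ℝ) := by linarith
  have hb : (0:ℝ) < (ν + d) / 2 := by positivity
  have ha : (0:ℝ) < ν / 2 := by positivity
  have hνd : (0:ℝ) < ν + d := by linarith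
  have hνdD : (0:ℝ) < ν + d * D := by positivity
  have H1 := psi_le_log_sub hb
  have H2 := log_sub_inv_le_psi ha
  have e1 : Real.log ((ν + d) / 2) = Real.log (ν + d) - Real.log 2 :=
    Real.log_div hνd.ne' (by norm_num)
  have e2 : Real.log (ν / 2) = Real.log ν - Real.log 2 :=
    Real.log_div hν.ne' (by norm_num)
  have e3 : Real.log (1 + (d:ℝ) * D / ν) = Real.log (ν + d * D) - Real.log ν := by
    rw [show 1 + (d:ℝ) * D / ν = (ν + d * D) / ν by field_simp]
    exact Real.log_div hνdD.ne' hν.ne'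
  have e4 : Real.log w = Real.log (ν + d) - Real.log (ν + d * D) := by
    rw [hw, hνt, show (ν / d + 1) / (ν / d + D) = (ν + d) / (ν + d * D) by
      rw [div_eq_div_iff (by positivity) hνdD.ne']
      field_simp]
    exact Real.log_div hνd.ne' hνdD.ne'
  have key : -(1 / (2 * ((ν + d) / 2))) / 2 + (1 / (ν / 2)) / 2 - d / (2 * ν)
      - ((ν + d) / 2) * (1 / (ν + d * D) - 1 / ν)
      = (1 / 2) * (-w + 1 + ((νt + 2) / (νt + 1)) * (1 / ν)) := by
    rw [hw, hνt]
    have h1 : ν / (d:ℝ) + 1 ≠ 0 := by positivity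
    have h2 : ν / (d:ℝ) + D ≠ 0 := by positivity
    field_simp
    ring
  rw [e1] at H1
  rw [e2] at H2
  rw [e3, e4]
  linarith [H1, H2, key]
end

section
/- Let d be a positive integer, ν̃ > 0 and D ≥ 0 real numbers, set ν = ν̃ d, w = (ν̃ + 1)/(ν̃ + D), and w_ν̃ = w − log w. Let ψ(x) denote the derivative at x of y ↦ log Γ(y). Then d · [ (1/2) ψ((ν + d)/2) − (1/2) ψ(ν/2) − d/(2ν) − (1/2) log(1 + dD/ν) − ((ν + d)/2)( 1/(ν + dD) − 1/ν ) ] ≤ (d/2) ( −w_ν̃ + 1 + ((ν̃ + 2)/(ν̃ + 1)) · (1/ν̃) ), and the right-hand side equals w_ν̃ · (d/2) · ( −1 + ( (ν̃ + 2)/(ν̃ + 1) + ν̃ ) / (ν̃ w_ν̃) ). -/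
open Set Filter Topology

noncomputable def adaLG : ℝ → ℝ := fun y => Real.log (Real.Gamma y)

lemma adaLG_diff {x : ℝ} (hx : 0 < x) : DifferentiableAt ℝ adaLG x := by
  refine (Real.differentiableAt_Gamma ?_).log (Real.Gamma_pos_of_pos hx).ne'
  exact fun m => ((neg_nonpos.mpr m.cast_nonneg).trans_lt hx).ne'

lemma adaLG_convex : ConvexOn ℝ (Set.Ioi 0) adaLG := Real.convexOn_log_Gamma

lemma adaLG_rec {x : ℝ} (hx : 0 < x) : adaLG (x + 1) = adaLG x + Real.log x := by
  simp only [adaLG]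
  rw [Real.Gamma_add_one hx.ne', Real.log_mul hx.ne' (Real.Gamma_pos_of_pos hx).ne', add_comm]

lemma deriv_adaLG_rec {x : ℝ} (hx : 0 < x) :
    deriv adaLG (x + 1) = deriv adaLG x + 1 / x := by
  rw [← deriv_comp_add_const, one_div, ← Real.deriv_log,
    ← deriv_add (adaLG_diff hx) (Real.differentiableAt_log hx.ne')]
  apply Filter.EventuallyEq.deriv_eq
  filter_upwards [eventually_gt_nhds hx] with t ht
  exact adaLG_rec ht

lemma deriv_adaLG_le_log {x : ℝ} (hx : 0 < x) : deriv adaLG x ≤ Real.log x := by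
  have h := adaLG_convex.deriv_le_slope (Set.mem_Ioi.mpr hx)
    (Set.mem_Ioi.mpr (by linarith : (0:ℝ) < x + 1)) (by linarith) (adaLG_diff hx)
  rw [slope_def_field, adaLG_rec hx, show adaLG x + Real.log x - adaLG x = Real.log x from by ring,
    show x + 1 - x = (1:ℝ) from by ring, div_one] at h
  exact h

lemma log_le_deriv_adaLG {x : ℝ} (hx : 0 < x) : Real.log x ≤ deriv adaLG (x + 1) := by
  have h := adaLG_convex.slope_le_deriv (Set.mem_Ioi.mpr hx)
    (Set.mem_Ioi.mpr (by linarith : (0:ℝ) < x + 1)) (by linarith)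
    (adaLG_diff (by linarith : (0:ℝ) < x + 1))
  rw [slope_def_field, adaLG_rec hx, show adaLG x + Real.log x - adaLG x = Real.log x from by ring,
    show x + 1 - x = (1:ℝ) from by ring, div_one] at h
  exact h

lemma log_sub_le_deriv_adaLG {x : ℝ} (hx : 0 < x) :
    Real.log x - 1 / x ≤ deriv adaLG x := by
  have h := log_le_deriv_adaLG hx
  rw [deriv_adaLG_rec hx] at h
  linarith

lemma ada_trapezoid {x : ℝ} (hx : 0 < x) :
    Real.log (x + 1) - Real.log x ≤ 1 / (2 * x) + 1 / (2 * (x + 1)) := by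
  have h0 : (0:ℝ) < (x + 1) / x := by positivity
  have hy : (1:ℝ) < (x + 1) / x := by rw [lt_div_iff₀ hx]; linarith
  have h1 : Real.log ((x + 1) / x) < Real.sinh (Real.log ((x + 1) / x)) :=
    Real.self_lt_sinh_iff.mpr (Real.log_pos hy)
  rw [Real.sinh_log h0, Real.log_div (by linarith) hx.ne'] at h1
  have h2 : ((x + 1) / x - ((x + 1) / x)⁻¹) / 2 = 1 / (2 * x) + 1 / (2 * (x + 1)) := by
    rw [inv_div]
    field_simp
    ring
  linarith

lemma deriv_adaLG_le {x : ℝ} (hx : 0 < x) :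
    deriv adaLG x ≤ Real.log x - 1 / (2 * x) := by
  set g : ℝ → ℝ := fun t => Real.log t - 1 / (2 * t) - deriv adaLG t with hg
  have step : ∀ t : ℝ, 0 < t → g (t + 1) ≤ g t := by
    intro t ht
    simp only [hg]
    rw [deriv_adaLG_rec ht]
    have := ada_trapezoid ht
    have h1x : 1 / (2 * t) + 1 / (2 * t) = 1 / t := by
      rw [← add_div, div_eq_div_iff (by positivity) ht.ne']; ring
    linarith
  have iter : ∀ n : ℕ, g (x + n) ≤ g x := by
    intro n
    induction n with
    | zero => simp
    | succ n ih =>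
      have hxn : (0:ℝ) < x + n := by positivity
      have h := step (x + n) hxn
      have hcast : x + ((n:ℝ) + 1) = (x + n) + 1 := by ring
      push_cast
      rw [hcast]
      linarith
  have lower : ∀ n : ℕ, -(1 / (2 * (x + (n:ℝ)))) ≤ g x := by
    intro n
    have hxn : (0:ℝ) < x + (n:ℝ) := by positivity
    have h1 := deriv_adaLG_le_log hxn
    have h2 := iter n
    simp only [hg] at h2 ⊢
    linarith
  have hlim : Tendsto (fun n : ℕ => -(1 / (2 * (x + (n:ℝ))))) atTop (𝓝 0) := by
    have h1 : Tendsto (fun n : ℕ => 2 * (x + (n:ℝ))) atTop atTop :=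
      (tendsto_atTop_add_const_left atTop x tendsto_natCast_atTop_atTop).const_mul_atTop two_pos
    have h2 := (tendsto_inv_atTop_zero.comp h1).neg
    simpa [one_div, Function.comp] using h2
  have h0 : (0:ℝ) ≤ g x := le_of_tendsto hlim (Filter.Eventually.of_forall lower)
  simp only [hg] at h0
  linarith

/-- Surrogate gradient bound (eq. (15) of the AdaTerm paper) for the update of the
proportionality coefficient `ν̃ = ν/d` of the degrees of freedom, with `ν = ν̃·d`,
robustness weight `w = (ν̃+1)/(ν̃+D)`, `w_ν̃ = w - log w`, and digamma `ψ = (log Γ)'`. -/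
theorem studentT_dof_coeff_gradient_upper_bound
    (d : ℕ) (hd : 1 ≤ d) (νt D : ℝ) (hνt : 0 < νt) (hD : 0 ≤ D)
    (ν w wν : ℝ) (hν : ν = νt * d) (hw : w = (νt + 1) / (νt + D)) (hwν : wν = w - Real.log w) :
    (d : ℝ) * ((1 / 2) * deriv (fun y : ℝ => Real.log (Real.Gamma y)) ((ν + d) / 2)
          - (1 / 2) * deriv (fun y : ℝ => Real.log (Real.Gamma y)) (ν / 2)
          - d / (2 * ν) - (1 / 2) * Real.log (1 + d * D / ν)
          - ((ν + d) / 2) * (1 / (ν + d * D) - 1 / ν))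
        ≤ (d / 2) * (-wν + 1 + ((νt + 2) / (νt + 1)) * (1 / νt))
      ∧ (d / 2) * (-wν + 1 + ((νt + 2) / (νt + 1)) * (1 / νt))
        = wν * (d / 2) * (-1 + (((νt + 2) / (νt + 1)) + νt) / (νt * wν)) := by
  have hd1 : (1:ℝ) ≤ (d:ℝ) := by exact_mod_cast hd
  have hdpos : (0:ℝ) < d := by linarith
  have hνpos : 0 < ν := by rw [hν]; exact mul_pos hνt hdpos
  have hA : 0 < ν / 2 := by linarith
  have hB : 0 < (ν + d) / 2 := by linarith
  have hdD : (0:ℝ) ≤ (d:ℝ) * D := mul_nonneg (by linarith) hD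
  have hνD : 0 < ν + (d:ℝ) * D := by linarith
  have hνtD : 0 < νt + D := by linarith
  have hw0 : 0 < w := by rw [hw]; exact div_pos (by linarith) hνtD
  have hwν_pos : 0 < wν := by
    have := Real.log_le_sub_one_of_pos hw0
    rw [hwν]; linarith
  constructor
  · -- the inequality
    simp only [show (fun y : ℝ => Real.log (Real.Gamma y)) = adaLG from rfl]
    have hψB := deriv_adaLG_le hB
    have hψA := log_sub_le_deriv_adaLG hA
    have step1 : (d : ℝ) * ((1 / 2) * deriv adaLG ((ν + d) / 2)
          - (1 / 2) * deriv adaLG (ν / 2)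
          - d / (2 * ν) - (1 / 2) * Real.log (1 + d * D / ν)
          - ((ν + d) / 2) * (1 / (ν + d * D) - 1 / ν))
        ≤ (d : ℝ) * ((1 / 2) * (Real.log ((ν + d) / 2) - 1 / (2 * ((ν + d) / 2)))
          - (1 / 2) * (Real.log (ν / 2) - 1 / (ν / 2))
          - d / (2 * ν) - (1 / 2) * Real.log (1 + d * D / ν)
          - ((ν + d) / 2) * (1 / (ν + d * D) - 1 / ν)) := by
      apply mul_le_mul_of_nonneg_left _ (le_of_lt hdpos)
      linarith
    refine le_trans step1 ?_
    -- log identities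
    have hxe : (0:ℝ) < νt * d := mul_pos hνt hdpos
    have hlog1 : Real.log ((ν + d) / 2)
        = Real.log (ν / 2) + (Real.log (νt + 1) - Real.log νt) := by
      rw [hν]
      rw [show (νt * (d:ℝ) + d) / 2 = (νt * (d:ℝ) / 2) * ((νt + 1) / νt) from by
        field_simp]
      rw [Real.log_mul (by positivity) (by positivity),
        Real.log_div (by linarith) hνt.ne']
    have hlog2 : Real.log (1 + (d:ℝ) * D / ν) = Real.log (νt + D) - Real.log νt := by
      rw [hν]
      rw [show 1 + (d:ℝ) * D / (νt * d) = (νt + D) / νt from by field_simp]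
      exact Real.log_div (by linarith) hνt.ne'
    have hlog3 : Real.log w = Real.log (νt + 1) - Real.log (νt + D) := by
      rw [hw]; exact Real.log_div (by linarith) hνtD.ne'
    rw [hlog1, hlog2, hwν, hlog3, hw, hν]
    rw [← sub_nonneg]
    have hslack : (0:ℝ) ≤ ((d:ℝ) - 1) * (νt + 2) / (2 * (νt * (νt + 1))) :=
      div_nonneg (mul_nonneg (by linarith) (by linarith)) (by positivity)
    calc (0:ℝ) ≤ ((d:ℝ) - 1) * (νt + 2) / (2 * (νt * (νt + 1))) := hslack
      _ = _ := by
          field_simp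
          ring
  · -- the equality
    have h1 : νt ≠ 0 := hνt.ne'
    have h2 : (νt + 1) ≠ 0 := by linarith
    have h3 : wν ≠ 0 := hwν_pos.ne'
    field_simp
    ring
end
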